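/- arXiv:1401.4682 — 9 statements merged into one kernel-verified Lean document; each statement's English description precedes it below -/
import Mathlib

section
/- The function y ↦ ∑_{n ∈ ℤ, n ≠ 0} log((4y² + n²)/n²) − 4πy + log(4y²) is bounded on the interval [1, ∞); that is, there exists a constant C > 0 such that for all y ≥ 1, |∑_{n ≠ 0} log((4y² + n²)/n²) − 4πy + log(4y²)| ≤ C. -/
open Filter Real


lemma euler_sinh_prod (x : ℝ) :
    Tendsto (fun n : ℕ => Real.pi * x * ∏ j ∈ Finset.range n, ((1:ℝ) + x ^ 2 / ((j:ℝ) + 1) ^ 2))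
      atTop (nhds (Real.sinh (Real.pi * x))) := by
  have h := (Complex.continuous_im.tendsto _).comp (Complex.tendsto_euler_sin_prod (x * Complex.I))
  convert h using 1
  · ext n
    simp only [Function.comp_apply]
    have hj : ∀ j ∈ Finset.range n, (1 : ℂ) - ((x:ℂ)*Complex.I)^2/((j:ℂ)+1)^2
        = (((1:ℝ) + x^2/((j:ℝ)+1)^2 : ℝ) : ℂ) := by
      intro j _; push_cast; rw [mul_pow, Complex.I_sq]; ring
    rw [Finset.prod_congr rfl hj, ← Complex.ofReal_prod,
      show ((Real.pi:ℂ) * ((x:ℂ) * Complex.I) * ((∏ j ∈ Finset.range n,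
          ((1:ℝ) + x^2/((j:ℝ)+1)^2) : ℝ) : ℂ))
        = ((Real.pi * x * ∏ j ∈ Finset.range n, ((1:ℝ) + x^2/((j:ℝ)+1)^2) : ℝ) : ℂ) * Complex.I by
        push_cast; ring]
    simp only [Complex.mul_im, Complex.ofReal_re, Complex.I_im, Complex.ofReal_im, Complex.I_re,
      mul_one, mul_zero, add_zero]
  · rw [show ((Real.pi : ℂ) * ((x:ℂ) * Complex.I)) = ((Real.pi * x : ℝ) : ℂ) * Complex.I by
      push_cast; ring, Complex.sin_mul_I, ← Complex.ofReal_sinh]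
    simp only [Complex.mul_im, Complex.ofReal_re, Complex.I_im, Complex.ofReal_im, Complex.I_re,
      mul_one, mul_zero, add_zero]


lemma summable_log_aux (x : ℝ) :
    Summable (fun n : ℕ => Real.log (1 + x ^ 2 / ((n : ℝ) + 1) ^ 2)) := by
  have hs : Summable (fun n : ℕ => x ^ 2 * (1 / ((n : ℝ) + 1) ^ 2)) := by
    have h0 : Summable (fun n : ℕ => 1 / ((n : ℝ)) ^ 2) :=
      Real.summable_one_div_nat_pow.mpr one_lt_two
    have h1 := (summable_nat_add_iff 1).mpr h0
    simpa using h1.mul_left (x ^ 2)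
  refine Summable.of_nonneg_of_le (fun n => ?_) (fun n => ?_) hs
  · exact Real.log_nonneg (le_add_of_nonneg_right (by positivity))
  · have h := Real.log_le_sub_one_of_pos (x := 1 + x ^ 2 / ((n : ℝ) + 1) ^ 2) (by positivity)
    calc Real.log (1 + x ^ 2 / ((n : ℝ) + 1) ^ 2) ≤ 1 + x ^ 2 / ((n : ℝ) + 1) ^ 2 - 1 := h
    _ = x ^ 2 * (1 / ((n : ℝ) + 1) ^ 2) := by ring

lemma tsum_log_eq (x : ℝ) (hx : 0 < x) :
    ∑' n : ℕ, Real.log (1 + x ^ 2 / ((n : ℝ) + 1) ^ 2)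
      = Real.log (Real.sinh (Real.pi * x) / (Real.pi * x)) := by
  have hpx : Real.pi * x ≠ 0 := by positivity
  have hsum := summable_log_aux x
  set L := ∑' n : ℕ, Real.log (1 + x ^ 2 / ((n : ℝ) + 1) ^ 2) with hL
  have h1 := hsum.hasSum.tendsto_sum_nat
  have h2 := (Real.continuous_exp.tendsto _).comp h1
  have h3 : ∀ n : ℕ, Real.exp (∑ j ∈ Finset.range n, Real.log (1 + x ^ 2 / ((j : ℝ) + 1) ^ 2))
      = ∏ j ∈ Finset.range n, ((1:ℝ) + x ^ 2 / ((j : ℝ) + 1) ^ 2) := by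
    intro n
    rw [Real.exp_sum]
    exact Finset.prod_congr rfl fun j _ => Real.exp_log (by positivity)
  have h2' : Tendsto (fun n : ℕ => ∏ j ∈ Finset.range n, ((1:ℝ) + x ^ 2 / ((j : ℝ) + 1) ^ 2))
      atTop (nhds (Real.exp L)) := by
    refine h2.congr fun n => ?_
    simp only [Function.comp_apply, h3]
  have h4 := (euler_sinh_prod x).const_mul (Real.pi * x)⁻¹
  simp only [inv_mul_cancel_left₀ hpx] at h4
  have h5 : Real.exp L = Real.sinh (Real.pi * x) / (Real.pi * x) := by
    have := tendsto_nhds_unique h2' h4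
    rwa [inv_mul_eq_div] at this
  rw [← h5, Real.log_exp]

/-- The function
`y ↦ ∑_{n ≠ 0} log((4y² + n²)/n²) − 4πy + log(4y²)` is bounded on `[1, ∞)`. -/
theorem sum_log_asymptotic_bounded :
    ∃ C > (0 : ℝ), ∀ y : ℝ, 1 ≤ y →
      |(∑' n : {n : ℤ // n ≠ 0}, Real.log ((4 * y ^ 2 + (n.1 : ℝ) ^ 2) / (n.1 : ℝ) ^ 2))
          - 4 * Real.pi * y + Real.log (4 * y ^ 2)| ≤ C := by
  have hpi : (0:ℝ) < Real.pi := Real.pi_pos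
  have hlog2pi : 0 < Real.log (2 * Real.pi) :=
    Real.log_pos (by nlinarith [Real.pi_gt_three])
  have he4 : Real.exp (-(4 * Real.pi)) < 1 := Real.exp_lt_one_iff.mpr (by linarith)
  have he4' : (0:ℝ) < 1 - Real.exp (-(4 * Real.pi)) := by linarith
  have hlogneg : Real.log (1 - Real.exp (-(4 * Real.pi))) < 0 :=
    Real.log_neg he4' (by nlinarith [Real.exp_pos (-(4 * Real.pi))])
  refine ⟨2 * Real.log (2 * Real.pi) - 2 * Real.log (1 - Real.exp (-(4 * Real.pi))),
    by linarith, fun y hy => ?_⟩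
  have hy0 : (0:ℝ) < y := by linarith
  set g : ℤ → ℝ := fun n => Real.log ((4 * y ^ 2 + (n : ℝ) ^ 2) / (n : ℝ) ^ 2) with hg
  have hg0 : g 0 = 0 := by simp [hg]
  have hterm : ∀ n : ℕ, g ((n : ℤ) + 1) = Real.log (1 + (2 * y) ^ 2 / ((n : ℝ) + 1) ^ 2) := by
    intro n
    have hm : ((n : ℝ) + 1) ≠ 0 := by positivity
    simp only [hg]
    push_cast
    congr 1
    field_simp
    ring
  have hgneg : ∀ m : ℤ, g (-m) = g m := by
    intro m
    simp only [hg]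
    push_cast
    rw [neg_sq]
  have hterm' : ∀ n : ℕ, g (-((n : ℤ) + 1)) = Real.log (1 + (2 * y) ^ 2 / ((n : ℝ) + 1) ^ 2) := by
    intro n; rw [hgneg]; exact hterm n
  have hs : Summable (fun n : ℕ => g ((n : ℤ) + 1)) := by
    simp only [hterm]; exact summable_log_aux (2 * y)
  have hs' : Summable (fun n : ℕ => g (-((n : ℤ) + 1))) := by
    simp only [hterm']; exact summable_log_aux (2 * y)
  have hsub : (∑' n : {n : ℤ // n ≠ 0},
      Real.log ((4 * y ^ 2 + (n.1 : ℝ) ^ 2) / (n.1 : ℝ) ^ 2)) = ∑' n : ℤ, g n := by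
    have h := tsum_subtype_eq_of_support_subset
      (f := fun n : ℤ => Real.log ((4 * y ^ 2 + (n : ℝ) ^ 2) / (n : ℝ) ^ 2))
      (s := {n : ℤ | n ≠ 0}) (by
        intro n hn
        simp only [Set.mem_setOf_eq]
        rintro rfl
        exact hn hg0)
    exact h
  have hZ : ∑' n : ℤ, g n = (∑' n : ℕ, g ((n : ℤ) + 1)) + g 0 + ∑' n : ℕ, g (-((n : ℤ) + 1)) :=
    tsum_of_add_one_of_neg_add_one hs hs'
  set t := Real.pi * (2 * y) with ht_def
  have ht : 0 < t := by rw [ht_def]; positivity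
  have hT : ∑' n : ℤ, g n = 2 * Real.log (Real.sinh t / t) := by
    rw [hZ, hg0]
    simp only [hterm, hterm']
    rw [tsum_log_eq (2 * y) (by positivity)]
    ring
  have hsinh : 0 < Real.sinh t := Real.sinh_pos_iff.mpr ht
  have h2t : (0:ℝ) < 1 - Real.exp (-(2 * t)) := by
    have := Real.exp_lt_one_iff.mpr (show -(2 * t) < 0 by linarith)
    linarith
  have hee : Real.exp t * Real.exp (-(2 * t)) = Real.exp (-t) := by
    rw [← Real.exp_add]; ring_nf
  have hsinh_eq : Real.sinh t = Real.exp t * (1 - Real.exp (-(2 * t))) / 2 := by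
    rw [Real.sinh_eq, ← hee]; ring
  have e1 : Real.log (Real.sinh t / t)
      = t + Real.log (1 - Real.exp (-(4 * Real.pi * y))) - Real.log 2 - Real.log t := by
    rw [Real.log_div (ne_of_gt hsinh) (ne_of_gt ht), hsinh_eq,
      Real.log_div (by positivity) two_ne_zero,
      Real.log_mul (Real.exp_ne_zero t) (ne_of_gt h2t), Real.log_exp,
      show -(2 * t) = -(4 * Real.pi * y) by rw [ht_def]; ring]
    try ring
  have e2 : Real.log t = Real.log Real.pi + Real.log (2 * y) := by
    rw [ht_def, Real.log_mul (ne_of_gt hpi) (by positivity)]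
  have e3 : Real.log (4 * y ^ 2) = 2 * Real.log (2 * y) := by
    rw [show 4 * y ^ 2 = (2 * y) ^ 2 by ring, Real.log_pow]
    norm_num
  have e4 : Real.log (2 * Real.pi) = Real.log 2 + Real.log Real.pi :=
    Real.log_mul two_ne_zero (ne_of_gt hpi)
  have e5 : 2 * t = 4 * Real.pi * y := by rw [ht_def]; ring
  have hE : (∑' n : ℤ, g n) - 4 * Real.pi * y + Real.log (4 * y ^ 2)
      = 2 * Real.log (1 - Real.exp (-(4 * Real.pi * y))) - 2 * Real.log (2 * Real.pi) := by
    rw [hT, e1, e3, e4]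
    linarith [e2, e5]
  rw [hsub, hE]
  have hu1 : Real.exp (-(4 * Real.pi * y)) ≤ Real.exp (-(4 * Real.pi)) :=
    Real.exp_le_exp.mpr (by nlinarith)
  have hu0 : (0:ℝ) < 1 - Real.exp (-(4 * Real.pi * y)) := by linarith
  have hA_le : Real.log (1 - Real.exp (-(4 * Real.pi * y))) ≤ 0 :=
    Real.log_nonpos (by linarith) (by nlinarith [Real.exp_pos (-(4 * Real.pi * y))])
  have hA_ge : Real.log (1 - Real.exp (-(4 * Real.pi)))
      ≤ Real.log (1 - Real.exp (-(4 * Real.pi * y))) :=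
    Real.log_le_log he4' (by linarith)
  rw [abs_le]
  constructor <;> linarith
end

section
/- Let f : (0, ∞) → ℝ be defined by f(y) = ∑_{n ∈ ℤ, n ≠ 0} log((4y² + n²)/n²). Then f is twice differentiable on (0, ∞) and for every y > 0 one has −y²·f''(y) = 2·(2πy/sinh(2πy))² − 2. -/
open Real Filter Topology

lemma prod_tendsto (y : ℝ) (hy : 0 < y) :
    Tendsto (fun n : ℕ => ∏ j ∈ Finset.range n, ((1 : ℝ) + 4 * y ^ 2 / ((j : ℝ) + 1) ^ 2))
      atTop (𝓝 (Real.sinh (2 * π * y) / (2 * π * y))) := by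
  have hz : (π : ℂ) * (2 * y * Complex.I) ≠ 0 := by
    simp [Real.pi_ne_zero, Complex.I_ne_zero, hy.ne']
  have h := (Complex.tendsto_euler_sin_prod (2 * y * Complex.I)).div_const
    (π * (2 * y * Complex.I))
  have h2 : Tendsto (fun n : ℕ => (((∏ j ∈ Finset.range n,
      ((1 : ℝ) + 4 * y ^ 2 / ((j : ℝ) + 1) ^ 2)) : ℝ) : ℂ))
      atTop (𝓝 ((Real.sinh (2 * π * y) / (2 * π * y) : ℝ) : ℂ)) := by
    convert h using 2 with n
    · rw [mul_div_cancel_left₀ _ hz, Complex.ofReal_prod]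
      refine Finset.prod_congr rfl fun j _ => ?_
      rw [mul_pow, mul_pow, Complex.I_sq]
      push_cast
      ring
    · have hzz : (π : ℂ) * (2 * y * Complex.I) = ((2 * π * y : ℝ) : ℂ) * Complex.I := by
        push_cast; ring
      rw [hzz, Complex.sin_mul_I, mul_div_mul_right _ _ Complex.I_ne_zero,
        ← Complex.ofReal_sinh, ← Complex.ofReal_div]
  exact Filter.tendsto_ofReal_iff.mp h2

lemma key_hasSum (y : ℝ) (hy : 0 < y) :
    HasSum (fun n : {n : ℤ // n ≠ 0} => Real.log ((4 * y ^ 2 + (n.1 : ℝ) ^ 2) / (n.1 : ℝ) ^ 2))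
      (2 * (Real.log (Real.sinh (2 * π * y)) - Real.log (2 * π * y))) := by
  set L : ℝ := Real.log (Real.sinh (2 * π * y) / (2 * π * y)) with hL
  set a : ℕ → ℝ := fun j => Real.log (1 + 4 * y ^ 2 / ((j : ℝ) + 1) ^ 2) with ha
  have hpos : ∀ j : ℕ, (0 : ℝ) < 1 + 4 * y ^ 2 / ((j : ℝ) + 1) ^ 2 := fun j => by positivity
  -- partial sums of a tend to L
  have hlog : Tendsto (fun n : ℕ => ∑ j ∈ Finset.range n, a j) atTop (𝓝 L) := by
    have hc : ContinuousAt Real.log (Real.sinh (2 * π * y) / (2 * π * y)) :=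
      Real.continuousAt_log (by positivity)
    have := hc.tendsto.comp (prod_tendsto y hy)
    refine this.congr fun n => ?_
    rw [Function.comp_apply, Real.log_prod]
    exact fun j _ => (hpos j).ne'
  -- summability
  have hsum : Summable a := by
    have h1 : Summable (fun j : ℕ => 4 * y ^ 2 / ((j : ℝ) + 1) ^ 2) := by
      have h0 : Summable (fun j : ℕ => 1 / ((j : ℝ)) ^ 2) :=
        summable_one_div_nat_pow.mpr one_lt_two
      have h0' := (summable_nat_add_iff 1).mpr h0
      have := h0'.mul_left (4 * y ^ 2)
      refine this.congr fun j => ?_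
      push_cast
      rw [mul_one_div]
    refine h1.of_nonneg_of_le (fun j => Real.log_nonneg (le_add_of_nonneg_right (by positivity))) (fun j => ?_)
    have := Real.log_le_sub_one_of_pos (hpos j)
    linarith
  have hA : HasSum a L := by
    have h1 := hsum.hasSum
    have hEq := tendsto_nhds_unique h1.tendsto_sum_nat hlog
    exact hEq ▸ h1
  -- transfer to ℤ
  set F : ℤ → ℝ := fun n => Real.log ((4 * y ^ 2 + (n : ℝ) ^ 2) / (n : ℝ) ^ 2) with hF
  have hF0 : F 0 = 0 := by simp [hF]
  have hFa : ∀ n : ℕ, F (n + 1) = a n := by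
    intro n
    have hne : ((n : ℝ) + 1) ^ 2 ≠ 0 := by positivity
    simp only [hF, ha]
    push_cast
    rw [add_div, div_self hne, add_comm]
  have hFnat : HasSum (fun n : ℕ => F n) L := by
    have h1 : HasSum (fun n : ℕ => F (((n + 1 : ℕ) : ℤ))) L := by
      rw [show (fun n : ℕ => F (((n + 1 : ℕ) : ℤ))) = a from funext fun n => by
        push_cast; exact hFa n]
      exact hA
    have h2 := (hasSum_nat_add_iff (f := fun n : ℕ => F n) 1).mp h1
    simpa [hF0] using h2
  have hFneg : HasSum (fun n : ℕ => F (-((n : ℤ) + 1))) L := by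
    rw [show (fun n : ℕ => F (-((n : ℤ) + 1))) = a from funext fun n => by
      rw [show F (-((n : ℤ) + 1)) = F ((n : ℤ) + 1) by
        simp only [hF]; push_cast; ring_nf]
      exact hFa n]
    exact hA
  have hFint : HasSum F (L + L) := hFnat.of_nat_of_neg_add_one hFneg
  have hind : HasSum (fun n : {n : ℤ // n ≠ 0} => F n.1) (L + L) := by
    have hind' : HasSum (({n : ℤ | n ≠ 0} : Set ℤ).indicator F) (L + L) := by
      convert hFint using 1
      funext n
      by_cases h : n = 0
      · simp [h, hF0]
      · simp [Set.indicator, h]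
    exact (hasSum_subtype_iff_indicator (s := {n : ℤ | n ≠ 0})).mpr hind'
  have hLL : L + L = 2 * (Real.log (Real.sinh (2 * π * y)) - Real.log (2 * π * y)) := by
    rw [hL, Real.log_div (Real.sinh_pos_iff.mpr (by positivity)).ne' (by positivity)]
    ring
  exact hLL ▸ hind

/-- The function `f(y) = ∑_{n ≠ 0} log((4y² + n²)/n²)` is twice
differentiable on `(0, ∞)` and `−y² f''(y) = 2 (2πy/sinh(2πy))² − 2` for all `y > 0`. -/
theorem hyperbolic_laplacian_of_parabolic_sum :
    let f : ℝ → ℝ := fun y =>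
      ∑' n : {n : ℤ // n ≠ 0}, Real.log ((4 * y ^ 2 + (n.1 : ℝ) ^ 2) / (n.1 : ℝ) ^ 2)
    (∀ y ∈ Set.Ioi (0 : ℝ), DifferentiableAt ℝ f y) ∧
    (∀ y ∈ Set.Ioi (0 : ℝ), DifferentiableAt ℝ (deriv f) y) ∧
    ∀ y ∈ Set.Ioi (0 : ℝ), -y ^ 2 * deriv (deriv f) y
      = 2 * (2 * Real.pi * y / Real.sinh (2 * Real.pi * y)) ^ 2 - 2 := by
  intro f
  set g : ℝ → ℝ := fun t => 2 * (Real.log (Real.sinh (2 * π * t)) - Real.log (2 * π * t))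
    with hg
  set G1 : ℝ → ℝ := fun t =>
    2 * (Real.cosh (2 * π * t) * (2 * π) / Real.sinh (2 * π * t) - 2 * π / (2 * π * t)) with hG1
  set G2 : ℝ → ℝ := fun t => 2 * (1 / t ^ 2 - (2 * π) ^ 2 / Real.sinh (2 * π * t) ^ 2) with hG2
  have hfg : Set.EqOn f g (Set.Ioi 0) := fun t ht => (key_hasSum t ht).tsum_eq
  have hlin : ∀ t : ℝ, HasDerivAt (fun u : ℝ => 2 * π * u) (2 * π) t := fun t => by
    simpa using (hasDerivAt_id t).const_mul (2 * π)
  have hg1 : ∀ t ∈ Set.Ioi (0 : ℝ), HasDerivAt g (G1 t) t := by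
    intro t ht
    have ht' : (0 : ℝ) < t := ht
    have hs : Real.sinh (2 * π * t) ≠ 0 := (Real.sinh_pos_iff.mpr (by positivity)).ne'
    have hsinh : HasDerivAt (fun u : ℝ => Real.sinh (2 * π * u))
        (Real.cosh (2 * π * t) * (2 * π)) t := (Real.hasDerivAt_sinh _).comp t (hlin t)
    have hls := hsinh.log hs
    have hl2 := (hlin t).log (by positivity : (2 * π * t) ≠ 0)
    exact (hls.sub hl2).const_mul 2
  have hg2 : ∀ t ∈ Set.Ioi (0 : ℝ), HasDerivAt G1 (G2 t) t := by
    intro t ht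
    have ht' : (0 : ℝ) < t := ht
    have hs : Real.sinh (2 * π * t) ≠ 0 := (Real.sinh_pos_iff.mpr (by positivity)).ne'
    have hsinh : HasDerivAt (fun u : ℝ => Real.sinh (2 * π * u))
        (Real.cosh (2 * π * t) * (2 * π)) t := (Real.hasDerivAt_sinh _).comp t (hlin t)
    have hcosh : HasDerivAt (fun u : ℝ => Real.cosh (2 * π * u))
        (Real.sinh (2 * π * t) * (2 * π)) t := (Real.hasDerivAt_cosh _).comp t (hlin t)
    have h1 := (hcosh.mul_const (2 * π)).div hsinh hs
    have h2 := (hasDerivAt_const t (2 * π)).div (hlin t) (by positivity : (2 * π * t) ≠ 0)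
    have h3 := (h1.sub h2).const_mul 2
    convert h3 using 1
    case e'_4 => rfl
    case e'_5 => rfl
    case e'_8 => rfl
    have hcs : Real.cosh (2 * π * t) ^ 2 = Real.sinh (2 * π * t) ^ 2 + 1 := Real.cosh_sq _
    rw [hG2]
    field_simp
    rw [show (2 * t * π) = 2 * π * t by ring]
    linear_combination (8 * π ^ 3 * t ^ 2) * hcs
  refine ⟨?_, ?_, ?_⟩
  · intro y hy
    have hev : f =ᶠ[𝓝 y] g := eventuallyEq_of_mem (isOpen_Ioi.mem_nhds hy) hfg
    exact hev.differentiableAt_iff.mpr (hg1 y hy).differentiableAt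
  all_goals {
    intro y hy
    have hderiv : Set.EqOn (deriv f) G1 (Set.Ioi 0) := by
      intro t ht
      have hev : f =ᶠ[𝓝 t] g := eventuallyEq_of_mem (isOpen_Ioi.mem_nhds ht) hfg
      rw [hev.deriv_eq]
      exact (hg1 t ht).deriv
    have hev2 : deriv f =ᶠ[𝓝 y] G1 := eventuallyEq_of_mem (isOpen_Ioi.mem_nhds hy) hderiv
    first
    | exact hev2.differentiableAt_iff.mpr (hg2 y hy).differentiableAt
    | · rw [hev2.deriv_eq, (hg2 y hy).deriv]
        have hy' : (0 : ℝ) < y := hy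
        have hs : Real.sinh (2 * π * y) ≠ 0 := (Real.sinh_pos_iff.mpr (by positivity)).ne'
        rw [hG2]
        field_simp
        ring }
end

section
/- Let (M, d) be a metric space, let 0 < ε < 1, and let z, p, q ∈ M satisfy d(p, q) ≤ ε and d(z, q) ≥ ε. Then sinh²(d(z, p)/2) ≤ 7·coth(ε/2)·sinh²(d(z, q)/2). -/
/-- The real hyperbolic cotangent. -/
noncomputable def Real.coth (x : ℝ) : ℝ := Real.cosh x / Real.sinh x

/-- In a metric space, if `0 < ε < 1`, `d(p,q) ≤ ε` and `d(z,q) ≥ ε`, then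
`sinh²(d(z,p)/2) ≤ 7 coth(ε/2) sinh²(d(z,q)/2)`. -/
theorem sinh_sq_dist_le {M : Type*} [MetricSpace M] (ε : ℝ) (hε0 : 0 < ε) (hε1 : ε < 1)
    (z p q : M) (hpq : dist p q ≤ ε) (hzq : ε ≤ dist z q) :
    Real.sinh (dist z p / 2) ^ 2 ≤ 7 * Real.coth (ε / 2) * Real.sinh (dist z q / 2) ^ 2 := by
  set a : ℝ := dist z q with ha
  have hd : dist z p ≤ a + ε := by
    calc dist z p ≤ dist z q + dist q p := dist_triangle z q p
    _ ≤ a + ε := by rw [dist_comm q p]; linarith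
  have hs : 0 < Real.sinh (ε / 2) := Real.sinh_pos_iff.mpr (by linarith)
  have hc : 0 < Real.cosh (ε / 2) := Real.cosh_pos _
  have hS : Real.sinh (ε / 2) ≤ Real.sinh (a / 2) :=
    Real.sinh_le_sinh.mpr (by linarith)
  have hS0 : 0 < Real.sinh (a / 2) := lt_of_lt_of_le hs hS
  have hC : 0 < Real.cosh (a / 2) := Real.cosh_pos _
  -- key: cosh(a/2) sinh(ε/2) ≤ cosh(ε/2) sinh(a/2)
  have hkey : Real.cosh (a / 2) * Real.sinh (ε / 2)
      ≤ Real.cosh (ε / 2) * Real.sinh (a / 2) := by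
    have h0 : 0 ≤ Real.sinh (a / 2 - ε / 2) := Real.sinh_nonneg_iff.mpr (by linarith)
    rw [Real.sinh_sub] at h0
    linarith
  have h1 : Real.sinh (dist z p / 2) ≤ 2 * Real.cosh (ε / 2) * Real.sinh (a / 2) := by
    have h2 : Real.sinh (dist z p / 2) ≤ Real.sinh (a / 2 + ε / 2) :=
      Real.sinh_le_sinh.mpr (by linarith)
    rw [Real.sinh_add] at h2
    linarith
  have hL0 : 0 ≤ Real.sinh (dist z p / 2) := Real.sinh_nonneg_iff.mpr (by positivity)
  have hsq : Real.sinh (dist z p / 2) ^ 2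
      ≤ 4 * Real.cosh (ε / 2) ^ 2 * Real.sinh (a / 2) ^ 2 := by
    nlinarith [mul_pos hc hS0]
  -- bound 4 cosh²(ε/2) ≤ 7 ≤ 7 coth(ε/2)
  have hsinh_half : Real.sinh (ε / 2) ≤ Real.exp (1 / 2) / 2 := by
    have := Real.sinh_le_sinh.mpr (show ε / 2 ≤ 1 / 2 by linarith)
    have h2 : Real.sinh (1 / 2 : ℝ) ≤ Real.exp (1 / 2) / 2 := by
      rw [Real.sinh_eq]
      have : (0:ℝ) < Real.exp (-(1/2)) := Real.exp_pos _
      linarith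
    linarith
  have hexp : Real.exp (1 / 2) * Real.exp (1 / 2) = Real.exp 1 := by
    rw [← Real.exp_add]; norm_num
  have he : Real.exp 1 < 2.7182818286 := Real.exp_one_lt_d9
  have hcoshsq : Real.cosh (ε / 2) ^ 2 = Real.sinh (ε / 2) ^ 2 + 1 := Real.cosh_sq (ε / 2)
  have h4c : 4 * Real.cosh (ε / 2) ^ 2 ≤ 7 := by nlinarith
  have hcoth : 1 ≤ Real.coth (ε / 2) := by
    rw [Real.coth, le_div_iff₀ hs, one_mul]
    exact (Real.sinh_lt_cosh _).le
  nlinarith [sq_nonneg (Real.sinh (a / 2)), mul_le_mul h4c (sq_nonneg (Real.sinh (a/2))) (by positivity) (by norm_num)]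
end

section
/- For every real ε with 0 < ε < 1 and every real a with a ≥ ε, one has sinh²((a + ε)/2) ≤ 7·coth(ε/2)·sinh²(a/2). -/
/-- For `0 < ε < 1` and `a ≥ ε`,
`sinh²((a + ε)/2) ≤ 7 coth(ε/2) sinh²(a/2)`. -/
theorem sinh_sq_add_le (ε a : ℝ) (hε0 : 0 < ε) (hε1 : ε < 1) (ha : ε ≤ a) :
    Real.sinh ((a + ε) / 2) ^ 2 ≤ 7 * Real.coth (ε / 2) * Real.sinh (a / 2) ^ 2 := by
  have hse : 0 < Real.sinh (ε / 2) := Real.sinh_pos_iff.2 (by linarith)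
  have hce : 0 < Real.cosh (ε / 2) := Real.cosh_pos _
  have hsa : 0 ≤ Real.sinh (a / 2) := Real.sinh_nonneg_iff.2 (by linarith)
  -- step 1: cosh(a/2) * sinh(ε/2) ≤ sinh(a/2) * cosh(ε/2)
  have h1 : Real.cosh (a / 2) * Real.sinh (ε / 2) ≤ Real.sinh (a / 2) * Real.cosh (ε / 2) := by
    have := Real.sinh_nonneg_iff.2 (show (0:ℝ) ≤ a / 2 - ε / 2 by linarith)
    rw [Real.sinh_sub] at this
    linarith
  -- step 2: sinh((a+ε)/2) ≤ 2 * sinh(a/2) * cosh(ε/2)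
  have h2 : Real.sinh ((a + ε) / 2) ≤ 2 * (Real.sinh (a / 2) * Real.cosh (ε / 2)) := by
    have : (a + ε) / 2 = a / 2 + ε / 2 := by ring
    rw [this, Real.sinh_add]
    linarith
  have h2' : 0 ≤ Real.sinh ((a + ε) / 2) := Real.sinh_nonneg_iff.2 (by linarith)
  have hsq : Real.sinh ((a + ε) / 2) ^ 2 ≤
      4 * Real.cosh (ε / 2) ^ 2 * Real.sinh (a / 2) ^ 2 := by
    have := mul_self_le_mul_self h2' h2
    nlinarith [this]
  -- step 3: 4 * cosh(ε/2)^2 ≤ 7 * coth(ε/2)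
  have h3 : 4 * Real.cosh (ε / 2) ^ 2 ≤ 7 * Real.coth (ε / 2) := by
    rw [Real.coth]
    have hsinh1 : Real.sinh ε ≤ 3 / 2 := by
      have h1 : Real.sinh ε ≤ Real.sinh 1 := Real.sinh_le_sinh.2 hε1.le
      have : Real.sinh 1 = (Real.exp 1 - Real.exp (-1)) / 2 := by
        rw [Real.sinh_eq]
      have he : Real.exp 1 ≤ 3 := by
        have := Real.exp_one_lt_d9
        linarith
      have he' : 0 < Real.exp (-1) := Real.exp_pos _
      linarith
    have key : 4 * Real.cosh (ε / 2) ^ 2 * Real.sinh (ε / 2) ≤ 7 * Real.cosh (ε / 2) := by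
      have h2s : Real.sinh ε = 2 * Real.sinh (ε / 2) * Real.cosh (ε / 2) := by
        have : ε = 2 * (ε / 2) := by ring
        rw [this, Real.sinh_two_mul]
        ring_nf
      nlinarith
    have : 7 * (Real.cosh (ε / 2) * (Real.sinh (ε / 2))⁻¹) - 4 * Real.cosh (ε / 2) ^ 2 =
        (7 * Real.cosh (ε / 2) - 4 * Real.cosh (ε / 2) ^ 2 * Real.sinh (ε / 2)) *
          (Real.sinh (ε / 2))⁻¹ := by
      field_simp
    have heq : 7 * (Real.cosh (ε / 2) / Real.sinh (ε / 2)) =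
        7 * Real.cosh (ε / 2) / Real.sinh (ε / 2) := by ring
    rw [heq, le_div_iff₀ hse]
    linarith
  nlinarith [sq_nonneg (Real.sinh (a / 2))]
end

section
/- For every real ε with 0 < ε < 1 and every real a with a ≥ ε/2, one has sinh²((a + ε)/2) ≤ 14·coth(ε/4)·sinh²(a/2). -/
private lemma aux_sq25 (c : ℝ) (h1 : 1 ≤ c) (h2 : c ≤ 2) : (2 * c + 1) ^ 2 ≤ 25 := by
  nlinarith

private lemma aux_exp_sub_mul (x : ℝ) (_hx : 0 ≤ x) :
    Real.exp x - x * Real.exp x ≤ 1 := by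
  have h1 : -x + 1 ≤ Real.exp (-x) := Real.add_one_le_exp _
  have hprod : Real.exp x * Real.exp (-x) = 1 := by rw [← Real.exp_add]; simp
  have h2 := mul_le_mul_of_nonneg_left h1 (Real.exp_pos x).le
  nlinarith [h2, hprod]

private lemma aux_sinh_le (x : ℝ) (hx0 : 0 ≤ x) (hx : x ≤ 1 / 4) (he : Real.exp x ≤ 2) :
    Real.sinh x ≤ 1 / 2 := by
  rw [Real.sinh_eq]
  have h1 : -x + 1 ≤ Real.exp (-x) := Real.add_one_le_exp _
  have h2 := aux_exp_sub_mul x hx0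
  have h3 : x * Real.exp x ≤ (1 / 4) * 2 :=
    mul_le_mul hx he (Real.exp_pos _).le (by norm_num)
  linarith

set_option maxHeartbeats 1000000 in
/-- For `0 < ε < 1` and `a ≥ ε/2`,
`sinh²((a + ε)/2) ≤ 14 coth(ε/4) sinh²(a/2)`. -/
theorem sinh_sq_add_le' (ε a : ℝ) (hε0 : 0 < ε) (hε1 : ε < 1) (ha : ε / 2 ≤ a) :
    Real.sinh ((a + ε) / 2) ^ 2 ≤ 14 * Real.coth (ε / 4) * Real.sinh (a / 2) ^ 2 := by
  have hε4 : (0:ℝ) < ε / 4 := by linarith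
  have hs4 : 0 < Real.sinh (ε / 4) := Real.sinh_pos_iff.mpr hε4
  have hc4 : 0 < Real.cosh (ε / 4) := Real.cosh_pos _
  have hsa : 0 < Real.sinh (a / 2) := Real.sinh_pos_iff.mpr (by linarith)
  have hca : 0 < Real.cosh (a / 2) := Real.cosh_pos _
  -- cosh(a/2) * sinh(ε/4) ≤ cosh(ε/4) * sinh(a/2)
  have key : Real.cosh (a / 2) * Real.sinh (ε / 4) ≤ Real.cosh (ε / 4) * Real.sinh (a / 2) := by
    have h0 : 0 ≤ Real.sinh (a / 2 - ε / 4) := by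
      rw [Real.sinh_nonneg_iff]; linarith
    rw [Real.sinh_sub] at h0; linarith
  have hs2 : Real.sinh (ε / 2) = 2 * Real.sinh (ε / 4) * Real.cosh (ε / 4) := by
    rw [show ε / 2 = 2 * (ε / 4) by ring, Real.sinh_two_mul]
  have hc2 : Real.cosh (ε / 2) = Real.cosh (ε / 4) ^ 2 + Real.sinh (ε / 4) ^ 2 := by
    rw [show ε / 2 = 2 * (ε / 4) by ring, Real.cosh_two_mul]
  have hcs : Real.cosh (ε / 4) ^ 2 = Real.sinh (ε / 4) ^ 2 + 1 := Real.cosh_sq _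
  have hadd : Real.sinh ((a + ε) / 2)
      = Real.sinh (a / 2) * Real.cosh (ε / 2) + Real.cosh (a / 2) * Real.sinh (ε / 2) := by
    rw [show (a + ε) / 2 = a / 2 + ε / 2 by ring, Real.sinh_add]
  have hkey2 : Real.cosh (a / 2) * Real.sinh (ε / 4) * (2 * Real.sinh (ε / 4) * Real.cosh (ε / 4))
      ≤ Real.cosh (ε / 4) * Real.sinh (a / 2) * (2 * Real.sinh (ε / 4) * Real.cosh (ε / 4)) :=
    mul_le_mul_of_nonneg_right key (by positivity)
  have step : Real.sinh ((a + ε) / 2) * Real.sinh (ε / 4)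
      ≤ Real.sinh (a / 2) * (2 * Real.cosh (ε / 2) + 1) * Real.sinh (ε / 4) := by
    have e1 : Real.cosh (ε / 4) * Real.sinh (a / 2) * (2 * Real.sinh (ε / 4) * Real.cosh (ε / 4))
        = Real.sinh (a / 2) * Real.sinh (ε / 4) * (2 * (Real.sinh (ε / 4) ^ 2 + 1)) := by
      rw [← hcs]; ring
    rw [hadd, hs2, hc2]
    nlinarith [hkey2, e1]
  have hL : 0 ≤ Real.sinh ((a + ε) / 2) := by
    rw [Real.sinh_nonneg_iff]; linarith
  have hC2 : (1:ℝ) ≤ Real.cosh (ε / 2) := Real.one_le_cosh _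
  have step' : Real.sinh ((a + ε) / 2) ≤ Real.sinh (a / 2) * (2 * Real.cosh (ε / 2) + 1) :=
    le_of_mul_le_mul_right step hs4
  have sq : Real.sinh ((a + ε) / 2) ^ 2
      ≤ Real.sinh (a / 2) ^ 2 * (2 * Real.cosh (ε / 2) + 1) ^ 2 := by
    rw [← mul_pow]
    exact pow_le_pow_left₀ hL step' 2
  -- numeric bounds
  have hexp : Real.exp (2⁻¹ : ℝ) ≤ 2 := by
    have h1 : Real.exp (2⁻¹ : ℝ) * Real.exp (2⁻¹ : ℝ) = Real.exp 1 := by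
      rw [← Real.exp_add]; norm_num
    have h2 := Real.exp_one_lt_d9
    nlinarith [Real.exp_pos (2⁻¹ : ℝ), sq_nonneg (Real.exp (2⁻¹ : ℝ) - 2)]
  have hexpε2 : Real.exp (ε / 2) ≤ 2 :=
    le_trans (Real.exp_le_exp.mpr (show ε / 2 ≤ (2⁻¹:ℝ) by linarith)) hexp
  have hexpε4 : Real.exp (ε / 4) ≤ 2 :=
    le_trans (Real.exp_le_exp.mpr (show ε / 4 ≤ (2⁻¹:ℝ) by linarith)) hexp
  have hcosh2 : Real.cosh (ε / 2) ≤ 2 := by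
    rw [Real.cosh_eq]
    have : Real.exp (-(ε / 2)) ≤ Real.exp (ε / 2) := Real.exp_le_exp.mpr (by linarith)
    linarith
  have hsinh4 : Real.sinh (ε / 4) ≤ 1 / 2 :=
    aux_sinh_le _ hε4.le (by linarith) hexpε4
  have hsq25 : (2 * Real.cosh (ε / 2) + 1) ^ 2 ≤ 25 := aux_sq25 _ hC2 hcosh2
  have final : Real.sinh (ε / 4) * (2 * Real.cosh (ε / 2) + 1) ^ 2
      ≤ 14 * Real.cosh (ε / 4) := by
    have h1 : (1:ℝ) ≤ Real.cosh (ε / 4) := Real.one_le_cosh _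
    have h2 : Real.sinh (ε / 4) * (2 * Real.cosh (ε / 2) + 1) ^ 2 ≤ (1 / 2) * 25 :=
      mul_le_mul hsinh4 hsq25 (by positivity) (by norm_num)
    linarith
  rw [← mul_le_mul_iff_of_pos_right hs4]
  have hcoth : Real.coth (ε / 4) * Real.sinh (ε / 4) = Real.cosh (ε / 4) := by
    rw [Real.coth]; field_simp
  calc Real.sinh ((a + ε) / 2) ^ 2 * Real.sinh (ε / 4)
      ≤ Real.sinh (a / 2) ^ 2 * (2 * Real.cosh (ε / 2) + 1) ^ 2 * Real.sinh (ε / 4) :=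
        mul_le_mul_of_nonneg_right sq hs4.le
    _ = Real.sinh (a / 2) ^ 2 * (Real.sinh (ε / 4) * (2 * Real.cosh (ε / 2) + 1) ^ 2) := by
        ring
    _ ≤ Real.sinh (a / 2) ^ 2 * (14 * Real.cosh (ε / 4)) :=
        mul_le_mul_of_nonneg_left final (sq_nonneg _)
    _ = 14 * Real.coth (ε / 4) * Real.sinh (a / 2) ^ 2 * Real.sinh (ε / 4) := by
        rw [show Real.sinh (a / 2) ^ 2 * (14 * Real.cosh (ε / 4))
            = 14 * (Real.coth (ε / 4) * Real.sinh (ε / 4)) * Real.sinh (a / 2) ^ 2 from by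
          rw [hcoth]; ring]
        ring
end

section
/- For every z in the upper half-plane ℍ, the function w ↦ g_ℍ(z, w) + log |1 − e^{2πi(w − z)}|² tends to log(4 (Im z)²) + log(4π²) as w → z (with w ∈ ℍ, w ≠ z). -/
open Filter Topology

/-- For `z` in the upper half-plane, the function
`w ↦ g_ℍ(z,w) + log |1 − e^{2πi(w − z)}|²` tends to `log(4 (Im z)²) + log(4π²)`
as `w → z` along points of the upper half-plane distinct from `z`. -/
theorem freeGreen_cusp_coordinate_limit (z : ℂ) (hz : 0 < z.im) :
    Tendsto (fun w : ℂ =>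
        Real.log ((‖(z - (starRingEnd ℂ) w) / (z - w)‖) ^ 2)
          + Real.log ((‖1 - Complex.exp (2 * Real.pi * Complex.I * (w - z))‖) ^ 2))
      (𝓝[{w : ℂ | 0 < w.im} \ {z}] z)
      (𝓝 (Real.log (4 * z.im ^ 2) + Real.log (4 * Real.pi ^ 2))) := by
  set L := 𝓝[{w : ℂ | 0 < w.im} \ {z}] z with hL
  set f : ℂ → ℂ := fun w => 1 - Complex.exp (2 * Real.pi * Complex.I * (w - z)) with hf
  have hπ : (0:ℝ) < Real.pi := Real.pi_pos
  -- derivative of f at z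
  have h1 : HasDerivAt (fun w : ℂ => 2 * (Real.pi:ℂ) * Complex.I * (w - z))
      (2 * (Real.pi:ℂ) * Complex.I) z := by
    simpa using ((hasDerivAt_id z).sub_const z).const_mul (2 * (Real.pi:ℂ) * Complex.I)
  have hd : HasDerivAt f (-(2 * (Real.pi:ℂ) * Complex.I)) z := by
    have h2 := h1.cexp
    simp only [sub_self, mul_zero, Complex.exp_zero, one_mul] at h2
    have h3 := (hasDerivAt_const z (1:ℂ)).sub h2
    rw [zero_sub] at h3
    exact h3
  have hslope : Tendsto (slope f z) (𝓝[≠] z) (𝓝 (-(2 * (Real.pi:ℂ) * Complex.I))) :=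
    hasDerivAt_iff_tendsto_slope.mp hd
  have hsub : L ≤ 𝓝[≠] z := nhdsWithin_mono z (fun w hw => hw.2)
  have hslopeL : Tendsto (slope f z) L (𝓝 (-(2 * (Real.pi:ℂ) * Complex.I))) :=
    hslope.mono_left hsub
  -- second piece tendsto
  have habsval : ‖-(2 * (Real.pi:ℂ) * Complex.I)‖^2 = 4 * Real.pi ^ 2 := by
    simp [Complex.norm_def, Complex.normSq_apply]
    rw [abs_of_pos hπ]; ring
  have T2 : Tendsto (fun w => Real.log (‖slope f z w‖^2)) L
      (𝓝 (Real.log (4 * Real.pi ^ 2))) := by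
    have habs : Tendsto (fun w => ‖slope f z w‖^2) L (𝓝 (4 * Real.pi ^ 2)) := by
      have h := ((continuous_norm.pow 2).tendsto _).comp hslopeL
      simp only [Function.comp_def, Pi.pow_apply] at h
      rwa [habsval] at h
    exact (Real.continuousAt_log (by positivity)).tendsto.comp habs
  -- first piece tendsto
  have hval1 : ‖z - (starRingEnd ℂ) z‖^2 = 4 * z.im ^ 2 := by
    rw [Complex.sub_conj]
    simp [Complex.norm_def, Complex.normSq_apply]
    rw [abs_of_pos hz]; ring
  have T1 : Tendsto (fun w => Real.log (‖z - (starRingEnd ℂ) w‖^2)) L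
      (𝓝 (Real.log (4 * z.im ^ 2))) := by
    have hc : Continuous (fun w : ℂ => ‖z - (starRingEnd ℂ) w‖^2) := by
      continuity
    have habs : Tendsto (fun w => ‖z - (starRingEnd ℂ) w‖^2) L
        (𝓝 (4 * z.im ^ 2)) := by
      have h := (hc.continuousAt (x := z)).tendsto.mono_left
        (nhdsWithin_le_nhds (s := {w : ℂ | 0 < w.im} \ {z}))
      rwa [hval1] at h
    exact (Real.continuousAt_log (by positivity)).tendsto.comp habs
  -- eventual equality
  have hev : (fun w => Real.log (‖z - (starRingEnd ℂ) w‖^2)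
        + Real.log (‖slope f z w‖^2)) =ᶠ[L]
      (fun w : ℂ =>
        Real.log ((‖(z - (starRingEnd ℂ) w) / (z - w)‖) ^ 2)
          + Real.log ((‖1 - Complex.exp (2 * Real.pi * Complex.I * (w - z))‖) ^ 2)) := by
    have hmem : ∀ᶠ w in L, w ∈ {w : ℂ | 0 < w.im} \ {z} := self_mem_nhdsWithin
    have hball : ∀ᶠ w in L, dist w z < 1 :=
      mem_nhdsWithin_of_mem_nhds (Metric.ball_mem_nhds z one_pos)
    filter_upwards [hmem, hball] with w hw hb
    have hwz : w ≠ z := fun h => hw.2 (by simp [h])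
    have hc : ‖z - w‖ ≠ 0 := by
      simp only [ne_eq, norm_eq_zero, sub_eq_zero]
      exact fun h => hwz h.symm
    have ha : ‖z - (starRingEnd ℂ) w‖ ≠ 0 := by
      simp only [ne_eq, norm_eq_zero, sub_eq_zero]
      intro h
      have : z.im = -w.im := by rw [h]; simp
      have := hw.1
      simp only [Set.mem_setOf_eq] at this
      linarith
    have hb0 : ‖1 - Complex.exp (2 * Real.pi * Complex.I * (w - z))‖ ≠ 0 := by
      simp only [ne_eq, norm_eq_zero, sub_eq_zero]
      intro h
      rw [eq_comm, Complex.exp_eq_one_iff] at h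
      obtain ⟨n, hn⟩ := h
      have h2 : (2 * (Real.pi:ℂ) * Complex.I) ≠ 0 :=
        mul_ne_zero (mul_ne_zero two_ne_zero (Complex.ofReal_ne_zero.mpr Real.pi_ne_zero))
          Complex.I_ne_zero
      have hwzn : w - z = n :=
        mul_left_cancel₀ h2 (by linear_combination hn)
      have hn0 : n ≠ 0 := by
        intro h0
        apply hwz
        rw [h0] at hwzn
        simpa [sub_eq_zero] using hwzn
      have : (1:ℝ) ≤ ‖w - z‖ := by
        rw [hwzn]
        have : (1:ℝ) ≤ |(n:ℝ)| := by
          exact_mod_cast Int.one_le_abs hn0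
        simpa [Complex.norm_intCast] using this
      rw [Complex.dist_eq] at hb
      linarith
    have hslope_eq : slope f z w
        = (1 - Complex.exp (2 * Real.pi * Complex.I * (w - z))) / (w - z) := by
      rw [slope_def_field]
      have hfz : f z = 0 := by simp [hf]
      rw [hfz, sub_zero]
    rw [hslope_eq]
    rw [norm_div, norm_div, norm_sub_rev w z, div_pow, div_pow,
      Real.log_div (pow_ne_zero 2 hb0) (pow_ne_zero 2 hc),
      Real.log_div (pow_ne_zero 2 ha) (pow_ne_zero 2 hc)]
    ring
  exact (T1.add T2).congr' hev
end

section
/- For every t₀ > 0 there exists a constant c₀ > 0 such that for all t with 0 < t ≤ t₀ and all η ≥ 0, the hyperbolic heat kernel K_ℍ(t; η) = (√2 · e^{−t/4}/(4πt)^{3/2}) · ∫_η^∞ r·e^{−r²/(4t)}/√(cosh r − cosh η) dr satisfies K_ℍ(t; η) ≤ (c₀/(4πt))·e^{−η²/(4t)}. -/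
open MeasureTheory

/-- The heat kernel on the hyperbolic upper half-plane, at time `t > 0` and
hyperbolic distance `η ≥ 0`. -/
noncomputable def hypHeatKernel (t η : ℝ) : ℝ :=
  (Real.sqrt 2 * Real.exp (-t / 4) / (4 * Real.pi * t) ^ ((3 : ℝ) / 2)) *
    ∫ r in Set.Ioi η, r * Real.exp (-r ^ 2 / (4 * t)) / Real.sqrt (Real.cosh r - Real.cosh η)

lemma cosh_lb {η r : ℝ} (hη : 0 ≤ η) (hr : η ≤ r) :
    (r + η) * (r - η) / 2 ≤ Real.cosh r - Real.cosh η := by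
  have key : Real.cosh r - Real.cosh η =
      2 * Real.sinh ((r + η) / 2) * Real.sinh ((r - η) / 2) := by
    have h1 : Real.cosh r = Real.cosh ((r + η) / 2 + (r - η) / 2) := by ring_nf
    have h2 : Real.cosh η = Real.cosh ((r + η) / 2 - (r - η) / 2) := by ring_nf
    rw [h1, h2, Real.cosh_add, Real.cosh_sub]; ring
  rw [key]
  have ha : (0:ℝ) ≤ (r + η) / 2 := by linarith
  have hb : (0:ℝ) ≤ (r - η) / 2 := by linarith
  have sa := Real.self_le_sinh_iff.2 ha
  have sb := Real.self_le_sinh_iff.2 hb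
  nlinarith [Real.sinh_nonneg_iff.2 ha, Real.sinh_nonneg_iff.2 hb]

lemma pointwise_bound {t η r : ℝ} (ht : 0 < t) (hη : 0 ≤ η) (hr : η < r) :
    r * Real.exp (-r ^ 2 / (4 * t)) / Real.sqrt (Real.cosh r - Real.cosh η) ≤
      Real.exp (-η ^ 2 / (4 * t)) *
        (Real.sqrt 2 * Real.exp (-(1 / (4 * t)) * (r - η) ^ 2) +
         Real.sqrt 2 * (Real.sqrt η / Real.sqrt (r - η)) *
           Real.exp (-(η / (2 * t)) * (r - η))) := by
  have hr0 : 0 < r := lt_of_le_of_lt hη hr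
  have hrη : 0 < r - η := sub_pos.2 hr
  have hrη' : 0 < r + η := by linarith
  set u := Real.sqrt (r - η) with hu_def
  set v := Real.sqrt η with hv_def
  set w := Real.sqrt (r + η) with hw_def
  have hu0 : 0 < u := Real.sqrt_pos.2 hrη
  have hw0 : 0 < w := Real.sqrt_pos.2 hrη'
  have hv0 : 0 ≤ v := Real.sqrt_nonneg _
  have h2 : (0:ℝ) < Real.sqrt 2 := Real.sqrt_pos.2 (by norm_num)
  have hS : w * u / Real.sqrt 2 ≤ Real.sqrt (Real.cosh r - Real.cosh η) := by
    have h1 : Real.sqrt ((r + η) * (r - η) / 2) = w * u / Real.sqrt 2 := by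
      rw [Real.sqrt_div (by positivity), Real.sqrt_mul hrη'.le]
    rw [← h1]
    exact Real.sqrt_le_sqrt (cosh_lb hη hr.le)
  have hSpos : (0:ℝ) < w * u / Real.sqrt 2 := by positivity
  have hu2 : u ^ 2 = r - η := Real.sq_sqrt hrη.le
  have hv2 : v ^ 2 = η := Real.sq_sqrt hη
  have hw2 : w ^ 2 = r + η := Real.sq_sqrt hrη'.le
  have hkey : r ≤ (u + v) * w := by
    have h1 : r ^ 2 ≤ ((u + v) * w) ^ 2 := by nlinarith [mul_nonneg hu0.le hv0]
    exact le_of_pow_le_pow_left₀ two_ne_zero (by positivity) h1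
  have hE1 : Real.exp (-r ^ 2 / (4 * t)) ≤
      Real.exp (-η ^ 2 / (4 * t)) * Real.exp (-(1 / (4 * t)) * (r - η) ^ 2) := by
    rw [← Real.exp_add]
    apply Real.exp_le_exp.2
    have h4t : (0:ℝ) < 4 * t := by linarith
    rw [div_le_iff₀ h4t]
    have hexp : (-η ^ 2 / (4 * t) + -(1 / (4 * t)) * (r - η) ^ 2) * (4 * t) =
        -η ^ 2 + -(r - η) ^ 2 := by field_simp
    rw [hexp]
    nlinarith [mul_nonneg hη hrη.le]
  have hE2 : Real.exp (-r ^ 2 / (4 * t)) ≤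
      Real.exp (-η ^ 2 / (4 * t)) * Real.exp (-(η / (2 * t)) * (r - η)) := by
    rw [← Real.exp_add]
    apply Real.exp_le_exp.2
    have h4t : (0:ℝ) < 4 * t := by linarith
    rw [div_le_iff₀ h4t]
    have hexp : (-η ^ 2 / (4 * t) + -(η / (2 * t)) * (r - η)) * (4 * t) =
        -η ^ 2 + -(2 * η * (r - η)) := by field_simp; ring
    rw [hexp]
    nlinarith [sq_nonneg (r - η)]
  have hEpos : (0:ℝ) < Real.exp (-r ^ 2 / (4 * t)) := Real.exp_pos _
  calc r * Real.exp (-r ^ 2 / (4 * t)) / Real.sqrt (Real.cosh r - Real.cosh η)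
      ≤ r * Real.exp (-r ^ 2 / (4 * t)) / (w * u / Real.sqrt 2) := by
        gcongr
    _ = Real.sqrt 2 * (r / (w * u)) * Real.exp (-r ^ 2 / (4 * t)) := by
        field_simp
    _ ≤ Real.sqrt 2 * ((u + v) * w / (w * u)) * Real.exp (-r ^ 2 / (4 * t)) := by
        gcongr
    _ = Real.sqrt 2 * Real.exp (-r ^ 2 / (4 * t)) +
        Real.sqrt 2 * (v / u) * Real.exp (-r ^ 2 / (4 * t)) := by
        field_simp
    _ ≤ Real.sqrt 2 * (Real.exp (-η ^ 2 / (4 * t)) * Real.exp (-(1 / (4 * t)) * (r - η) ^ 2)) +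
        Real.sqrt 2 * (v / u) *
          (Real.exp (-η ^ 2 / (4 * t)) * Real.exp (-(η / (2 * t)) * (r - η))) := by
        gcongr
    _ = Real.exp (-η ^ 2 / (4 * t)) *
        (Real.sqrt 2 * Real.exp (-(1 / (4 * t)) * (r - η) ^ 2) +
         Real.sqrt 2 * (v / u) * Real.exp (-(η / (2 * t)) * (r - η))) := by ring

lemma int_bound {t η : ℝ} (ht : 0 < t) (hη : 0 ≤ η) :
    IntegrableOn (fun s => Real.sqrt 2 * Real.exp (-(1 / (4 * t)) * s ^ 2) +
        Real.sqrt 2 * (Real.sqrt η / Real.sqrt s) * Real.exp (-(η / (2 * t)) * s))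
      (Set.Ioi 0) ∧
    (∫ s in Set.Ioi 0, (Real.sqrt 2 * Real.exp (-(1 / (4 * t)) * s ^ 2) +
        Real.sqrt 2 * (Real.sqrt η / Real.sqrt s) * Real.exp (-(η / (2 * t)) * s)))
      ≤ 4 * Real.sqrt Real.pi * Real.sqrt t := by
  have hπ := Real.pi_pos
  have hb : (0:ℝ) < 1 / (4 * t) := by positivity
  have hg1 : Integrable (fun s : ℝ => Real.exp (-(1 / (4 * t)) * s ^ 2)) :=
    integrable_exp_neg_mul_sq hb
  have hint1 : (∫ s in Set.Ioi (0:ℝ), Real.exp (-(1 / (4 * t)) * s ^ 2)) =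
      Real.sqrt (Real.pi / (1 / (4 * t))) / 2 := integral_gaussian_Ioi _
  have hval1 : Real.sqrt (Real.pi / (1 / (4 * t))) / 2 = Real.sqrt Real.pi * Real.sqrt t := by
    rw [show Real.pi / (1 / (4 * t)) = 2 ^ 2 * (Real.pi * t) by field_simp; ring,
      Real.sqrt_mul (by positivity), Real.sqrt_sq (by norm_num),
      Real.sqrt_mul hπ.le]
    ring
  have hsqrt2_le : Real.sqrt 2 ≤ 2 := by
    nlinarith [Real.sq_sqrt (show (0:ℝ) ≤ 2 by norm_num), Real.sqrt_nonneg 2]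
  have hst : (0:ℝ) ≤ Real.sqrt Real.pi * Real.sqrt t := by positivity
  rcases eq_or_lt_of_le hη with h0 | h0
  · -- η = 0
    have hfun : (fun s : ℝ => Real.sqrt 2 * Real.exp (-(1 / (4 * t)) * s ^ 2) +
        Real.sqrt 2 * (Real.sqrt η / Real.sqrt s) * Real.exp (-(η / (2 * t)) * s)) =
        fun s : ℝ => Real.sqrt 2 * Real.exp (-(1 / (4 * t)) * s ^ 2) := by
      funext s; rw [← h0]; simp
    rw [hfun]
    constructor
    · exact (hg1.const_mul _).integrableOn
    · rw [integral_const_mul, hint1, hval1]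
      nlinarith [Real.sqrt_nonneg 2]
  · -- η > 0
    have hb2 : (0:ℝ) < η / (2 * t) := by positivity
    have hG2 : IntegrableOn
        (fun x : ℝ => x ^ ((1:ℝ)/2 - 1) * Real.exp (-(η / (2 * t) * x))) (Set.Ioi 0) := by
      have := integrableOn_rpow_mul_exp_neg_mul_rpow
        (show (-1:ℝ) < -(1/2) by norm_num) (one_pos (α := ℝ)) hb2
      refine this.congr_fun (fun x hx => ?_) measurableSet_Ioi
      simp only [Real.rpow_one]
      norm_num
    have hintG2 : (∫ x in Set.Ioi (0:ℝ), x ^ ((1:ℝ)/2 - 1) * Real.exp (-(η / (2 * t) * x))) =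
        (1 / (η / (2 * t))) ^ ((1:ℝ)/2) * Real.Gamma (1/2) :=
      Real.integral_rpow_mul_exp_neg_mul_Ioi (by norm_num) hb2
    have heq2 : Set.EqOn
        (fun s : ℝ => Real.sqrt 2 * (Real.sqrt η / Real.sqrt s) * Real.exp (-(η / (2 * t)) * s))
        (fun s : ℝ => (Real.sqrt 2 * Real.sqrt η) *
          (s ^ ((1:ℝ)/2 - 1) * Real.exp (-(η / (2 * t) * s)))) (Set.Ioi 0) := by
      intro x hx
      have hx0 : (0:ℝ) < x := hx
      have hxr : x ^ ((1:ℝ)/2 - 1) = (Real.sqrt x)⁻¹ := by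
        rw [show (1:ℝ)/2 - 1 = -(1/2) by norm_num, Real.rpow_neg hx0.le,
          ← Real.sqrt_eq_rpow]
      simp only [hxr, neg_mul]
      field_simp
    have hg2' : IntegrableOn
        (fun x : ℝ => (Real.sqrt 2 * Real.sqrt η) *
          (x ^ ((1:ℝ)/2 - 1) * Real.exp (-(η / (2 * t) * x)))) (Set.Ioi 0) :=
      hG2.const_mul _
    have hg2 : IntegrableOn
        (fun s : ℝ => Real.sqrt 2 * (Real.sqrt η / Real.sqrt s) *
          Real.exp (-(η / (2 * t)) * s)) (Set.Ioi 0) :=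
      hg2'.congr_fun (fun x hx => (heq2 hx).symm) measurableSet_Ioi
    have hint2 : (∫ s in Set.Ioi (0:ℝ), Real.sqrt 2 * (Real.sqrt η / Real.sqrt s) *
        Real.exp (-(η / (2 * t)) * s)) = 2 * (Real.sqrt Real.pi * Real.sqrt t) := by
      have e1 : (∫ s in Set.Ioi (0:ℝ), Real.sqrt 2 * (Real.sqrt η / Real.sqrt s) *
          Real.exp (-(η / (2 * t)) * s)) =
          ∫ s in Set.Ioi (0:ℝ), (Real.sqrt 2 * Real.sqrt η) *
            (s ^ ((1:ℝ)/2 - 1) * Real.exp (-(η / (2 * t) * s))) := by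
        exact setIntegral_congr_fun measurableSet_Ioi heq2
      rw [e1, integral_const_mul, hintG2, Real.Gamma_one_half_eq]
      have hval2 : Real.sqrt η * (1 / (η / (2 * t))) ^ ((1:ℝ)/2) = Real.sqrt 2 * Real.sqrt t := by
        rw [← Real.sqrt_eq_rpow, ← Real.sqrt_mul hη,
          show η * (1 / (η / (2 * t))) = 2 * t by field_simp,
          Real.sqrt_mul (by norm_num)]
      have h22 : Real.sqrt 2 * Real.sqrt 2 = 2 := Real.mul_self_sqrt (by norm_num)
      calc Real.sqrt 2 * Real.sqrt η * ((1 / (η / (2 * t))) ^ ((1:ℝ)/2) * Real.sqrt Real.pi)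
          = Real.sqrt 2 * (Real.sqrt η * (1 / (η / (2 * t))) ^ ((1:ℝ)/2)) * Real.sqrt Real.pi := by
            ring
        _ = Real.sqrt 2 * (Real.sqrt 2 * Real.sqrt t) * Real.sqrt Real.pi := by rw [hval2]
        _ = 2 * (Real.sqrt Real.pi * Real.sqrt t) := by rw [← mul_assoc, h22]; ring
    constructor
    · exact ((hg1.const_mul (Real.sqrt 2)).integrableOn).add hg2
    · rw [integral_add ((hg1.const_mul (Real.sqrt 2)).integrableOn) hg2,
        integral_const_mul, hint1, hval1, hint2]
      nlinarith [Real.sqrt_nonneg 2]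

/-- For every `t₀ > 0` there is `c₀ > 0` with
`K_ℍ(t; η) ≤ (c₀/(4πt)) e^{−η²/(4t)}` for all `0 < t ≤ t₀` and `η ≥ 0`. -/
theorem hypHeatKernel_small_time_bound (t₀ : ℝ) (ht₀ : 0 < t₀) :
    ∃ c₀ > (0 : ℝ), ∀ t : ℝ, 0 < t → t ≤ t₀ → ∀ η : ℝ, 0 ≤ η →
      hypHeatKernel t η ≤ c₀ / (4 * Real.pi * t) * Real.exp (-η ^ 2 / (4 * t)) := by
  refine ⟨4, by norm_num, fun t ht htt₀ η hη => ?_⟩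
  have hπ := Real.pi_pos
  have hE0 : (0:ℝ) < Real.exp (-η ^ 2 / (4 * t)) := Real.exp_pos _
  obtain ⟨hgint, hgval⟩ := int_bound ht hη
  have hpre : (fun x : ℝ => x + η) ⁻¹' Set.Ioi η = Set.Ioi 0 := by
    ext x; simp [Set.mem_Ioi]
  have hmp : MeasurePreserving (fun x : ℝ => x + η) volume volume :=
    measurePreserving_add_right volume η
  have hemb : MeasurableEmbedding (fun x : ℝ => x + η) := measurableEmbedding_addRight η
  set G : ℝ → ℝ := fun r => Real.exp (-η ^ 2 / (4 * t)) *
      (Real.sqrt 2 * Real.exp (-(1 / (4 * t)) * (r - η) ^ 2) +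
       Real.sqrt 2 * (Real.sqrt η / Real.sqrt (r - η)) *
         Real.exp (-(η / (2 * t)) * (r - η))) with hG
  have hcomp : (fun x : ℝ => G (x + η)) = fun s : ℝ => Real.exp (-η ^ 2 / (4 * t)) *
      (Real.sqrt 2 * Real.exp (-(1 / (4 * t)) * s ^ 2) +
       Real.sqrt 2 * (Real.sqrt η / Real.sqrt s) * Real.exp (-(η / (2 * t)) * s)) := by
    funext s; simp only [hG, add_sub_cancel_right]
  have hshift : (∫ r in Set.Ioi η, G r) =
      ∫ s in Set.Ioi 0, Real.exp (-η ^ 2 / (4 * t)) *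
        (Real.sqrt 2 * Real.exp (-(1 / (4 * t)) * s ^ 2) +
         Real.sqrt 2 * (Real.sqrt η / Real.sqrt s) * Real.exp (-(η / (2 * t)) * s)) := by
    rw [← hmp.setIntegral_preimage_emb hemb G (Set.Ioi η), hpre]
    rw [show (fun x : ℝ => G (x + η)) = _ from hcomp]
  have hbig : IntegrableOn G (Set.Ioi η) := by
    rw [← hmp.integrableOn_comp_preimage hemb, hpre]
    have : (G ∘ fun x : ℝ => x + η) = fun x : ℝ => G (x + η) := rfl
    rw [this, hcomp]
    exact hgint.const_mul _
  have hmono : (∫ r in Set.Ioi η,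
      r * Real.exp (-r ^ 2 / (4 * t)) / Real.sqrt (Real.cosh r - Real.cosh η))
      ≤ ∫ r in Set.Ioi η, G r := by
    refine integral_mono_of_nonneg ?_ hbig ?_
    · filter_upwards [ae_restrict_mem measurableSet_Ioi] with r hr
      have hr' : η < r := hr
      have hr0 : (0:ℝ) < r := lt_of_le_of_lt hη hr'
      positivity
    · filter_upwards [ae_restrict_mem measurableSet_Ioi] with r hr
      exact pointwise_bound ht hη hr
  have hIg : (∫ r in Set.Ioi η, G r) ≤
      Real.exp (-η ^ 2 / (4 * t)) * (4 * Real.sqrt Real.pi * Real.sqrt t) := by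
    rw [hshift, integral_const_mul]
    exact mul_le_mul_of_nonneg_left hgval hE0.le
  have hP : (0:ℝ) ≤ Real.sqrt 2 * Real.exp (-t / 4) / (4 * Real.pi * t) ^ ((3 : ℝ) / 2) := by
    positivity
  have step1 : hypHeatKernel t η ≤
      Real.sqrt 2 * Real.exp (-t / 4) / (4 * Real.pi * t) ^ ((3 : ℝ) / 2) *
        (Real.exp (-η ^ 2 / (4 * t)) * (4 * Real.sqrt Real.pi * Real.sqrt t)) := by
    rw [hypHeatKernel]
    exact mul_le_mul_of_nonneg_left (le_trans hmono hIg) hP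
  refine le_trans step1 ?_
  -- final algebra
  have hpow : (4 * Real.pi * t) ^ ((3 : ℝ) / 2) =
      (4 * Real.pi * t) * (2 * Real.sqrt Real.pi * Real.sqrt t) := by
    have h1 : (4 * Real.pi * t) ^ ((3 : ℝ) / 2) =
        (4 * Real.pi * t) ^ (1:ℝ) * (4 * Real.pi * t) ^ ((1:ℝ)/2) := by
      rw [← Real.rpow_add (by positivity)]; norm_num
    have h2 : (4 * Real.pi * t) ^ ((1:ℝ)/2) = 2 * Real.sqrt Real.pi * Real.sqrt t := by
      rw [← Real.sqrt_eq_rpow, show 4 * Real.pi * t = 2 ^ 2 * (Real.pi * t) by ring,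
        Real.sqrt_mul (by positivity), Real.sqrt_sq (by norm_num),
        Real.sqrt_mul hπ.le]
      ring
    rw [h1, h2, Real.rpow_one]
  rw [hpow]
  have hπt : (0:ℝ) < Real.sqrt Real.pi * Real.sqrt t := by positivity
  have hLHS_eq : Real.sqrt 2 * Real.exp (-t / 4) /
      ((4 * Real.pi * t) * (2 * Real.sqrt Real.pi * Real.sqrt t)) *
        (Real.exp (-η ^ 2 / (4 * t)) * (4 * Real.sqrt Real.pi * Real.sqrt t)) =
      2 * Real.sqrt 2 * Real.exp (-t / 4) * Real.exp (-η ^ 2 / (4 * t)) / (4 * Real.pi * t) := by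
    field_simp
    ring
  rw [hLHS_eq, show (4:ℝ) / (4 * Real.pi * t) * Real.exp (-η ^ 2 / (4 * t)) =
      4 * Real.exp (-η ^ 2 / (4 * t)) / (4 * Real.pi * t) by ring]
  gcongr
  have hexp1 : Real.exp (-t / 4) ≤ 1 := Real.exp_le_one_iff.2 (by linarith)
  have hsqrt2_le : Real.sqrt 2 ≤ 2 := by
    nlinarith [Real.sq_sqrt (show (0:ℝ) ≤ 2 by norm_num), Real.sqrt_nonneg 2]
  nlinarith [Real.sqrt_nonneg 2, Real.exp_pos (-t / 4), hE0]
end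

section
/- For every t₀ > 0 there exists a constant c_∞ > 0 such that for all t ≥ t₀ and all η ≥ 0, the hyperbolic heat kernel K_ℍ(t; η) = (√2 · e^{−t/4}/(4πt)^{3/2}) · ∫_η^∞ r·e^{−r²/(4t)}/√(cosh r − cosh η) dr satisfies K_ℍ(t; η) ≤ c_∞·e^{−t/4}. -/
open MeasureTheory

namespace HypHeatAux

open Real

theorem cosh_lb (η r : ℝ) (hη : 0 ≤ η) (hr : η ≤ r) :
    (r^2 - η^2)/2 ≤ Real.cosh r - Real.cosh η := by
  have h : MonotoneOn (fun x : ℝ => Real.cosh x - x^2/2) (Set.Ici 0) := by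
    apply monotoneOn_of_deriv_nonneg (convex_Ici 0)
    · exact (Real.continuous_cosh.sub (by continuity)).continuousOn
    · intro x hx
      exact ((Real.differentiable_cosh x).sub
        ((differentiable_pow 2).div_const 2 x)).differentiableWithinAt
    · intro x hx
      simp only [interior_Ici, Set.mem_Ioi] at hx
      have hd : deriv (fun x : ℝ => Real.cosh x - x^2/2) x = Real.sinh x - x := by
        rw [deriv_fun_sub (Real.differentiable_cosh x) ((differentiable_pow 2).div_const 2 x),
          deriv_div_const, Real.deriv_cosh, deriv_pow_field]
        ring
      rw [hd]
      have := Real.self_le_sinh_iff.mpr hx.le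
      linarith
  have := h (Set.mem_Ici.mpr hη) (Set.mem_Ici.mpr (hη.trans hr)) hr
  simp only at this; linarith

theorem xexp_le (a x : ℝ) (ha : 0 < a) (hx : 0 ≤ x) :
    x * Real.exp (-x^2/a) ≤ Real.sqrt a := by
  have h1 : x^2/a ≤ Real.exp (x^2/a) := (Real.add_one_le_exp _).trans' (by nlinarith)
  have h2 : x^2 ≤ a * Real.exp (x^2/a) := by
    rw [div_le_iff₀ ha] at h1; nlinarith
  have he1 : (1:ℝ) ≤ Real.exp (x^2/a) := Real.one_le_exp (by positivity)
  have h3 : x ≤ Real.sqrt a * Real.exp (x^2/a) := by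
    calc x = Real.sqrt (x^2) := (Real.sqrt_sq hx).symm
      _ ≤ Real.sqrt (a * Real.exp (x^2/a)) := Real.sqrt_le_sqrt h2
      _ = Real.sqrt a * Real.sqrt (Real.exp (x^2/a)) := Real.sqrt_mul ha.le _
      _ ≤ Real.sqrt a * Real.exp (x^2/a) := by
          refine mul_le_mul_of_nonneg_left ?_ (Real.sqrt_nonneg a)
          calc Real.sqrt (Real.exp (x^2/a)) ≤ Real.sqrt ((Real.exp (x^2/a))^2) :=
                Real.sqrt_le_sqrt (by nlinarith)
            _ = Real.exp (x^2/a) := Real.sqrt_sq (Real.exp_nonneg _)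
  calc x * Real.exp (-x^2/a) ≤ (Real.sqrt a * Real.exp (x^2/a)) * Real.exp (-x^2/a) :=
        mul_le_mul_of_nonneg_right h3 (Real.exp_nonneg _)
    _ = Real.sqrt a := by
        rw [mul_assoc, ← Real.exp_add]
        ring_nf
        rw [Real.exp_zero, mul_one]

theorem rpow_half_eq (s : ℝ) (hs : 0 < s) : s ^ (-(1:ℝ)/2) = 1 / Real.sqrt s := by
  rw [show (-(1:ℝ)/2) = -(1/2) by ring, Real.rpow_neg hs.le, ← Real.sqrt_eq_rpow, one_div]

theorem h_le_rpow (t s : ℝ) (ht : 0 < t) (hs : 0 < s) :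
    Real.exp (-s^2/(8*t)) / Real.sqrt s ≤ s ^ (-(1:ℝ)/2) := by
  rw [rpow_half_eq s hs]
  gcongr
  exact Real.exp_le_one_iff.mpr (by
      have : (0:ℝ) ≤ s^2/(8*t) := by positivity
      rw [neg_div]; linarith)

theorem h_le_gauss (t s : ℝ) (ht : 0 < t) (hs : s ∈ Set.Ioi (1:ℝ)) :
    Real.exp (-s^2/(8*t)) / Real.sqrt s ≤ Real.exp (-(8*t)⁻¹ * s^2) := by
  have hs1 : (1:ℝ) ≤ s := le_of_lt hs
  have hsq : (1:ℝ) ≤ Real.sqrt s := by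
    rw [show (1:ℝ) = Real.sqrt 1 by simp]; exact Real.sqrt_le_sqrt hs1
  have heq : -(8*t)⁻¹ * s^2 = -s^2/(8*t) := by field_simp
  rw [heq]
  calc Real.exp (-s^2/(8*t)) / Real.sqrt s ≤ Real.exp (-s^2/(8*t)) / 1 :=
        div_le_div_of_nonneg_left (Real.exp_nonneg _) one_pos hsq
    _ = Real.exp (-s^2/(8*t)) := div_one _

theorem hrpow_int : IntegrableOn (fun s : ℝ => s ^ (-(1:ℝ)/2)) (Set.Ioc 0 1) := by
  have := intervalIntegral.intervalIntegrable_rpow' (a := 0) (b := 1)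
    (r := -(1:ℝ)/2) (by norm_num)
  rwa [intervalIntegrable_iff, Set.uIoc_of_le zero_le_one] at this

theorem h_meas (t : ℝ) : Measurable (fun s : ℝ => Real.exp (-s^2/(8*t)) / Real.sqrt s) :=
  (Real.measurable_exp.comp (by fun_prop)).div Real.continuous_sqrt.measurable

theorem h_int1 (t : ℝ) (ht : 0 < t) :
    IntegrableOn (fun s : ℝ => Real.exp (-s^2/(8*t)) / Real.sqrt s) (Set.Ioc 0 1) := by
  refine hrpow_int.integrable.mono (h_meas t).aestronglyMeasurable ?_
  filter_upwards [ae_restrict_mem measurableSet_Ioc] with s hs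
  rw [Real.norm_eq_abs, Real.norm_eq_abs, abs_of_nonneg (by positivity),
    abs_of_nonneg (Real.rpow_nonneg hs.1.le _)]
  exact h_le_rpow t s ht hs.1

theorem h_int2 (t : ℝ) (ht : 0 < t) :
    IntegrableOn (fun s : ℝ => Real.exp (-s^2/(8*t)) / Real.sqrt s) (Set.Ioi 1) := by
  have hb : (0:ℝ) < (8*t)⁻¹ := by positivity
  have hgauss : Integrable (fun s : ℝ => Real.exp (-(8*t)⁻¹ * s^2)) := integrable_exp_neg_mul_sq hb
  refine hgauss.integrableOn.integrable.mono (h_meas t).aestronglyMeasurable ?_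
  filter_upwards [ae_restrict_mem measurableSet_Ioi] with s hs
  rw [Real.norm_eq_abs, Real.norm_eq_abs, abs_of_nonneg (by positivity),
    abs_of_nonneg (Real.exp_nonneg _)]
  exact h_le_gauss t s ht hs

theorem h_integrableOn (t : ℝ) (ht : 0 < t) :
    IntegrableOn (fun s : ℝ => Real.exp (-s^2/(8*t)) / Real.sqrt s) (Set.Ioi 0) := by
  have := (h_int1 t ht).union (h_int2 t ht)
  rwa [Set.Ioc_union_Ioi_eq_Ioi zero_le_one] at this

theorem h_integral_le (t : ℝ) (ht : 0 < t) :
    ∫ s in Set.Ioi (0:ℝ), Real.exp (-s^2/(8*t)) / Real.sqrt s ≤ 2 + Real.sqrt (8*π*t) := by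
  have hb : (0:ℝ) < (8*t)⁻¹ := by positivity
  have hgauss : Integrable (fun s : ℝ => Real.exp (-(8*t)⁻¹ * s^2)) := integrable_exp_neg_mul_sq hb
  have hsplit : (∫ s in Set.Ioi (0:ℝ), Real.exp (-s^2/(8*t)) / Real.sqrt s)
      = (∫ s in Set.Ioc (0:ℝ) 1, Real.exp (-s^2/(8*t)) / Real.sqrt s)
        + ∫ s in Set.Ioi (1:ℝ), Real.exp (-s^2/(8*t)) / Real.sqrt s := by
    rw [← setIntegral_union (Set.Ioc_disjoint_Ioi le_rfl) measurableSet_Ioi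
      (h_int1 t ht) (h_int2 t ht), Set.Ioc_union_Ioi_eq_Ioi zero_le_one]
  rw [hsplit]
  have hA : (∫ s in Set.Ioc (0:ℝ) 1, Real.exp (-s^2/(8*t)) / Real.sqrt s) ≤ 2 := by
    calc (∫ s in Set.Ioc (0:ℝ) 1, Real.exp (-s^2/(8*t)) / Real.sqrt s)
        ≤ ∫ s in Set.Ioc (0:ℝ) 1, s ^ (-(1:ℝ)/2) :=
          setIntegral_mono_on (h_int1 t ht) hrpow_int measurableSet_Ioc
            (fun s hs => h_le_rpow t s ht hs.1)
      _ = ∫ s in (0:ℝ)..1, s ^ (-(1:ℝ)/2) := (intervalIntegral.integral_of_le zero_le_one).symm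
      _ = 2 := by
          rw [_root_.integral_rpow (Or.inl (by norm_num))]
          norm_num
  have hB : (∫ s in Set.Ioi (1:ℝ), Real.exp (-s^2/(8*t)) / Real.sqrt s) ≤ Real.sqrt (8*π*t) := by
    calc (∫ s in Set.Ioi (1:ℝ), Real.exp (-s^2/(8*t)) / Real.sqrt s)
        ≤ ∫ s in Set.Ioi (1:ℝ), Real.exp (-(8*t)⁻¹ * s^2) :=
          setIntegral_mono_on (h_int2 t ht) hgauss.integrableOn measurableSet_Ioi
            (fun s hs => h_le_gauss t s ht hs)
      _ ≤ ∫ s : ℝ, Real.exp (-(8*t)⁻¹ * s^2) :=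
          setIntegral_le_integral hgauss (Filter.Eventually.of_forall fun s => Real.exp_nonneg _)
      _ = Real.sqrt (π / (8*t)⁻¹) := integral_gaussian _
      _ = Real.sqrt (8*π*t) := by
          congr 1
          field_simp
  linarith

theorem shift_indicator (h : ℝ → ℝ) (η : ℝ) :
    (fun x => (Set.Ioi (0:ℝ)).indicator h (x - η)) = (Set.Ioi η).indicator (fun r => h (r - η)) := by
  funext x
  by_cases hx : x ∈ Set.Ioi η
  · rw [Set.indicator_of_mem hx]
    exact Set.indicator_of_mem (by simp only [Set.mem_Ioi] at hx ⊢; linarith) h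
  · rw [Set.indicator_of_notMem hx]
    exact Set.indicator_of_notMem (by simp only [Set.mem_Ioi] at hx ⊢; linarith) h

theorem shift_integral (h : ℝ → ℝ) (η : ℝ) :
    ∫ r in Set.Ioi η, h (r - η) = ∫ s in Set.Ioi (0:ℝ), h s := by
  rw [← integral_indicator measurableSet_Ioi, ← integral_indicator measurableSet_Ioi,
    ← shift_indicator h η, integral_sub_right_eq_self _ η]

theorem shift_integrable (h : ℝ → ℝ) (η : ℝ) (hint : IntegrableOn h (Set.Ioi (0:ℝ))) :
    IntegrableOn (fun r => h (r - η)) (Set.Ioi η) := by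
  rw [← integrable_indicator_iff measurableSet_Ioi, ← shift_indicator h η]
  have : Integrable ((Set.Ioi (0:ℝ)).indicator h) :=
    (integrable_indicator_iff measurableSet_Ioi).mpr hint
  exact this.comp_sub_right η

theorem f_le_g (t η r : ℝ) (ht : 0 < t) (hη : 0 ≤ η) (hr : η < r) :
    r * Real.exp (-r^2/(4*t)) / Real.sqrt (Real.cosh r - Real.cosh η)
      ≤ Real.sqrt 2 * (1 + Real.sqrt (8*t))
          * (Real.exp (-(r-η)^2/(8*t)) / Real.sqrt (r-η)) := by
  have hr0 : 0 < r := lt_of_le_of_lt hη hr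
  have hsub : 0 < r - η := by linarith
  -- lower bound on the cosh difference
  have hcosh : r*(r-η)/2 ≤ Real.cosh r - Real.cosh η := by
    have := cosh_lb η r hη hr.le
    nlinarith
  have hD' : 0 < Real.sqrt r * Real.sqrt (r-η) / Real.sqrt 2 := by positivity
  have hDle : Real.sqrt r * Real.sqrt (r-η) / Real.sqrt 2 ≤
      Real.sqrt (Real.cosh r - Real.cosh η) := by
    have h1 : Real.sqrt (r*(r-η)/2) = Real.sqrt r * Real.sqrt (r-η) / Real.sqrt 2 := by
      rw [Real.sqrt_div (by positivity) 2, Real.sqrt_mul hr0.le]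
    rw [← h1]
    exact Real.sqrt_le_sqrt hcosh
  -- step 3/4: f ≤ √2 √r e^{-r²/4t}/√(r-η)
  have step3 : r * Real.exp (-r^2/(4*t)) / Real.sqrt (Real.cosh r - Real.cosh η)
      ≤ Real.sqrt 2 * Real.sqrt r * Real.exp (-r^2/(4*t)) / Real.sqrt (r-η) := by
    calc r * Real.exp (-r^2/(4*t)) / Real.sqrt (Real.cosh r - Real.cosh η)
        ≤ r * Real.exp (-r^2/(4*t)) / (Real.sqrt r * Real.sqrt (r-η) / Real.sqrt 2) :=
          div_le_div_of_nonneg_left (by positivity) hD' hDle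
      _ = Real.sqrt 2 * Real.sqrt r * Real.exp (-r^2/(4*t)) / Real.sqrt (r-η) := by
          have h2 : Real.sqrt r ≠ 0 := by positivity
          have h3 : Real.sqrt (r-η) ≠ 0 := by positivity
          have h4 : Real.sqrt 2 ≠ 0 := by positivity
          field_simp
          linear_combination -1 *
            (Real.mul_self_sqrt hr0.le)
  -- step 5: √r e^{-r²/4t} ≤ (1+√(8t)) e^{-(r-η)²/8t}
  have hexp_split : Real.exp (-r^2/(4*t)) = Real.exp (-r^2/(8*t)) * Real.exp (-r^2/(8*t)) := by
    rw [← Real.exp_add]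
    congr 1
    field_simp
    ring
  have parta : Real.sqrt r * Real.exp (-r^2/(8*t)) ≤ 1 + Real.sqrt (8*t) := by
    rcases le_or_gt r 1 with hc | hc
    · have h1 : Real.sqrt r ≤ 1 := Real.sqrt_le_one.mpr hc
      have h2 : Real.exp (-r^2/(8*t)) ≤ 1 := Real.exp_le_one_iff.mpr (by
        have : (0:ℝ) ≤ r^2/(8*t) := by positivity
        rw [neg_div]; linarith)
      nlinarith [Real.exp_nonneg (-r^2/(8*t)), Real.sqrt_nonneg (8*t), Real.sqrt_nonneg r]
    · have h1 : Real.sqrt r ≤ r := by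
        calc Real.sqrt r ≤ Real.sqrt (r^2) := Real.sqrt_le_sqrt (by nlinarith)
          _ = r := Real.sqrt_sq hr0.le
      have h2 := xexp_le (8*t) r (by positivity) hr0.le
      have h3 : Real.sqrt r * Real.exp (-r^2/(8*t)) ≤ r * Real.exp (-r^2/(8*t)) :=
        mul_le_mul_of_nonneg_right h1 (Real.exp_nonneg _)
      linarith
  have partb : Real.exp (-r^2/(8*t)) ≤ Real.exp (-(r-η)^2/(8*t)) := by
    apply Real.exp_le_exp.mpr
    rw [neg_div, neg_div, neg_le_neg_iff]
    gcongr
    nlinarith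
  have step5 : Real.sqrt r * Real.exp (-r^2/(4*t))
      ≤ (1 + Real.sqrt (8*t)) * Real.exp (-(r-η)^2/(8*t)) := by
    rw [hexp_split, ← mul_assoc]
    exact mul_le_mul parta partb (Real.exp_nonneg _)
      (by positivity)
  calc r * Real.exp (-r^2/(4*t)) / Real.sqrt (Real.cosh r - Real.cosh η)
      ≤ Real.sqrt 2 * Real.sqrt r * Real.exp (-r^2/(4*t)) / Real.sqrt (r-η) := step3
    _ = Real.sqrt 2 * (Real.sqrt r * Real.exp (-r^2/(4*t))) / Real.sqrt (r-η) := by ring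
    _ ≤ Real.sqrt 2 * ((1 + Real.sqrt (8*t)) * Real.exp (-(r-η)^2/(8*t))) / Real.sqrt (r-η) := by
        gcongr
    _ = Real.sqrt 2 * (1 + Real.sqrt (8*t)) * (Real.exp (-(r-η)^2/(8*t)) / Real.sqrt (r-η)) := by
        ring

end HypHeatAux

open HypHeatAux Real in
/-- For every `t₀ > 0` there is `c_∞ > 0` with
`K_ℍ(t; η) ≤ c_∞ e^{−t/4}` for all `t ≥ t₀` and `η ≥ 0`. -/
theorem hypHeatKernel_large_time_bound (t₀ : ℝ) (ht₀ : 0 < t₀) :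
    ∃ c > (0 : ℝ), ∀ t : ℝ, t₀ ≤ t → ∀ η : ℝ, 0 ≤ η →
      hypHeatKernel t η ≤ c * Real.exp (-t / 4) := by
  set A : ℝ := 1/Real.sqrt t₀ + Real.sqrt 8 with hA
  set B : ℝ := 2/Real.sqrt t₀ + Real.sqrt (8*π) with hB
  set Q : ℝ := (4*π) ^ ((3:ℝ)/2) with hQ
  have hπ := Real.pi_pos
  have hApos : 0 < A := by positivity
  have hBpos : 0 < B := by positivity
  have hQpos : 0 < Q := by positivity
  refine ⟨2*A*B/(Q*Real.sqrt t₀), by positivity, fun t ht η hη => ?_⟩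
  set c : ℝ := 2*A*B/(Q*Real.sqrt t₀) with hc
  have ht' : 0 < t := lt_of_lt_of_le ht₀ ht
  have hc1 : (0:ℝ) ≤ Real.sqrt 2 * (1 + Real.sqrt (8*t)) := by positivity
  -- bound the integral
  have hIle : (∫ r in Set.Ioi η, r * Real.exp (-r ^ 2 / (4 * t)) /
        Real.sqrt (Real.cosh r - Real.cosh η))
      ≤ Real.sqrt 2 * (1 + Real.sqrt (8*t)) * (2 + Real.sqrt (8*π*t)) := by
    have hg_int : IntegrableOn
        (fun r => Real.sqrt 2 * (1 + Real.sqrt (8*t)) *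
          (Real.exp (-(r-η)^2/(8*t)) / Real.sqrt (r-η))) (Set.Ioi η) := by
      exact (shift_integrable (fun s => Real.exp (-s^2/(8*t)) / Real.sqrt s) η
        (h_integrableOn t ht')).const_mul _
    have step1 : (∫ r in Set.Ioi η, r * Real.exp (-r ^ 2 / (4 * t)) /
          Real.sqrt (Real.cosh r - Real.cosh η))
        ≤ ∫ r in Set.Ioi η, Real.sqrt 2 * (1 + Real.sqrt (8*t)) *
            (Real.exp (-(r-η)^2/(8*t)) / Real.sqrt (r-η)) := by
      refine integral_mono_of_nonneg ?_ hg_int ?_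
      · filter_upwards [ae_restrict_mem measurableSet_Ioi] with r hr
        have hr0 : 0 < r := lt_of_le_of_lt hη hr
        positivity
      · filter_upwards [ae_restrict_mem measurableSet_Ioi] with r hr
        exact f_le_g t η r ht' hη hr
    have step2 : (∫ r in Set.Ioi η, Real.sqrt 2 * (1 + Real.sqrt (8*t)) *
          (Real.exp (-(r-η)^2/(8*t)) / Real.sqrt (r-η)))
        = Real.sqrt 2 * (1 + Real.sqrt (8*t)) *
            ∫ s in Set.Ioi (0:ℝ), Real.exp (-s^2/(8*t)) / Real.sqrt s := by
      rw [integral_const_mul]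
      congr 1
      exact shift_integral (fun s => Real.exp (-s^2/(8*t)) / Real.sqrt s) η
    calc (∫ r in Set.Ioi η, r * Real.exp (-r ^ 2 / (4 * t)) /
          Real.sqrt (Real.cosh r - Real.cosh η))
        ≤ ∫ r in Set.Ioi η, Real.sqrt 2 * (1 + Real.sqrt (8*t)) *
            (Real.exp (-(r-η)^2/(8*t)) / Real.sqrt (r-η)) := step1
      _ = Real.sqrt 2 * (1 + Real.sqrt (8*t)) *
            ∫ s in Set.Ioi (0:ℝ), Real.exp (-s^2/(8*t)) / Real.sqrt s := step2
      _ ≤ Real.sqrt 2 * (1 + Real.sqrt (8*t)) * (2 + Real.sqrt (8*π*t)) :=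
          mul_le_mul_of_nonneg_left (h_integral_le t ht') hc1
  -- the prefactor
  have hQ't : (0:ℝ) < (4*π*t) ^ ((3:ℝ)/2) := Real.rpow_pos_of_pos (by positivity) _
  have hP : (0:ℝ) ≤ Real.sqrt 2 * Real.exp (-t / 4) / (4*π*t) ^ ((3:ℝ)/2) := by positivity
  have hK : hypHeatKernel t η ≤ (Real.sqrt 2 * Real.exp (-t / 4) / (4*π*t) ^ ((3:ℝ)/2)) *
      (Real.sqrt 2 * (1 + Real.sqrt (8*t)) * (2 + Real.sqrt (8*π*t))) :=
    mul_le_mul_of_nonneg_left hIle hP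
  refine hK.trans ?_
  -- algebra: the remaining inequality
  set u : ℝ := Real.sqrt t with hu
  have hu0 : 0 < u := Real.sqrt_pos.mpr ht'
  have hu₀ : 0 < Real.sqrt t₀ := Real.sqrt_pos.mpr ht₀
  have huu : u * u = t := Real.mul_self_sqrt ht'.le
  have hule : Real.sqrt t₀ ≤ u := Real.sqrt_le_sqrt ht
  have h8t : Real.sqrt (8*t) = Real.sqrt 8 * u := Real.sqrt_mul (by norm_num) t
  have h8pt : Real.sqrt (8*π*t) = Real.sqrt (8*π) * u := by
    rw [show 8*π*t = (8*π)*t by ring]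
    exact Real.sqrt_mul (by positivity) t
  have hQ' : (4*π*t) ^ ((3:ℝ)/2) = Q * (t * u) := by
    rw [hQ, show (4*π*t) = (4*π)*t by ring,
      Real.mul_rpow (by positivity) ht'.le,
      show (3:ℝ)/2 = 1 + 1/2 by norm_num, Real.rpow_add ht', Real.rpow_one,
      ← Real.sqrt_eq_rpow, Real.rpow_add (by positivity), Real.rpow_one, ← Real.sqrt_eq_rpow]
  have hAu : 1 + Real.sqrt 8 * u ≤ A * u := by
    have h1 : (1:ℝ) ≤ u / Real.sqrt t₀ := (one_le_div hu₀).mpr hule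
    have : A * u = u / Real.sqrt t₀ + Real.sqrt 8 * u := by rw [hA]; ring
    rw [this]; linarith
  have hBu : 2 + Real.sqrt (8*π) * u ≤ B * u := by
    have h1 : (1:ℝ) ≤ u / Real.sqrt t₀ := (one_le_div hu₀).mpr hule
    have : B * u = 2 * (u / Real.sqrt t₀) + Real.sqrt (8*π) * u := by rw [hB]; ring
    rw [this]; linarith
  have hmain : Real.sqrt 2 * (Real.sqrt 2 * (1 + Real.sqrt (8*t)) * (2 + Real.sqrt (8*π*t)))
      ≤ c * (4*π*t) ^ ((3:ℝ)/2) := by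
    have h22 : Real.sqrt 2 * Real.sqrt 2 = 2 := Real.mul_self_sqrt (by norm_num)
    have lhs_eq : Real.sqrt 2 * (Real.sqrt 2 * (1 + Real.sqrt (8*t)) * (2 + Real.sqrt (8*π*t)))
        = 2 * ((1 + Real.sqrt 8 * u) * (2 + Real.sqrt (8*π) * u)) := by
      rw [h8t, h8pt]
      linear_combination ((1 + Real.sqrt 8 * u) * (2 + Real.sqrt (8*π) * u)) * h22
    have step : (1 + Real.sqrt 8 * u) * (2 + Real.sqrt (8*π) * u) ≤ (A*u) * (B*u) :=
      mul_le_mul hAu hBu (by positivity) (by positivity)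
    have rhs_eq : c * (4*π*t) ^ ((3:ℝ)/2) = 2*A*B*(u*u) * (u / Real.sqrt t₀) := by
      rw [hQ', hc, ← huu]
      field_simp
    have h1 : (1:ℝ) ≤ u / Real.sqrt t₀ := (one_le_div hu₀).mpr hule
    have h2 : (0:ℝ) ≤ 2*A*B*(u*u) := by positivity
    have last : 2 * ((A*u) * (B*u)) ≤ 2*A*B*(u*u) * (u / Real.sqrt t₀) := by
      calc 2 * ((A*u) * (B*u)) = 2*A*B*(u*u) * 1 := by ring
        _ ≤ 2*A*B*(u*u) * (u / Real.sqrt t₀) := mul_le_mul_of_nonneg_left h1 h2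
    rw [lhs_eq, rhs_eq]
    have step2 : 2 * ((1 + Real.sqrt 8 * u) * (2 + Real.sqrt (8*π) * u))
        ≤ 2 * ((A*u) * (B*u)) := by linarith
    exact step2.trans last
  calc (Real.sqrt 2 * Real.exp (-t / 4) / (4*π*t) ^ ((3:ℝ)/2)) *
        (Real.sqrt 2 * (1 + Real.sqrt (8*t)) * (2 + Real.sqrt (8*π*t)))
      = Real.exp (-t / 4) * ((Real.sqrt 2 * (Real.sqrt 2 * (1 + Real.sqrt (8*t)) *
          (2 + Real.sqrt (8*π*t)))) / (4*π*t) ^ ((3:ℝ)/2)) := by ring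
    _ ≤ Real.exp (-t / 4) * c := by
        refine mul_le_mul_of_nonneg_left ?_ (Real.exp_nonneg _)
        rw [div_le_iff₀ hQ't]
        exact hmain
    _ = c * Real.exp (-t / 4) := mul_comm _ _
end

section
/- The improper integral ∫₀^∞ log(coth ρ)·sinh ρ dρ converges and equals log 2; equivalently, ∫₀^∞ log(coth² ρ)·sinh ρ dρ = 2·log 2. -/
open MeasureTheory

/-- Antiderivative of `log (coth ρ) * sinh ρ`, written in a form continuous at `0`. -/
noncomputable def cothAux (ρ : ℝ) : ℝ :=
  Real.cosh ρ * Real.log (Real.cosh ρ) - Real.log 2 * Real.cosh ρ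
    - Real.sinh (ρ / 2) ^ 2 * Real.log (Real.sinh (ρ / 2) ^ 2)
    - Real.cosh (ρ / 2) ^ 2 * Real.log (Real.cosh (ρ / 2) ^ 2)

lemma cothAux_zero : cothAux 0 = -Real.log 2 := by
  simp [cothAux]

lemma cothAux_continuous : Continuous cothAux := by
  have h1 : Continuous fun ρ : ℝ => Real.sinh (ρ / 2) ^ 2 :=
    (Real.continuous_sinh.comp (continuous_id.div_const 2)).pow 2
  have h2 : Continuous fun ρ : ℝ => Real.cosh (ρ / 2) ^ 2 :=
    (Real.continuous_cosh.comp (continuous_id.div_const 2)).pow 2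
  exact (((Real.continuous_mul_log.comp Real.continuous_cosh).sub
    (continuous_const.mul Real.continuous_cosh)).sub
    (Real.continuous_mul_log.comp h1)).sub (Real.continuous_mul_log.comp h2)

lemma sinh_eq_double (ρ : ℝ) :
    Real.sinh ρ = 2 * Real.sinh (ρ / 2) * Real.cosh (ρ / 2) := by
  rw [← Real.sinh_two_mul]; congr 1; ring

lemma cosh_eq_double (ρ : ℝ) :
    Real.cosh ρ = Real.cosh (ρ / 2) ^ 2 + Real.sinh (ρ / 2) ^ 2 := by
  rw [← Real.cosh_two_mul]; congr 1; ring

lemma log_sinh_eq {ρ : ℝ} (hρ : 0 < ρ) :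
    Real.log (Real.sinh ρ) =
      Real.log 2 + Real.log (Real.sinh (ρ / 2)) + Real.log (Real.cosh (ρ / 2)) := by
  have hs : 0 < Real.sinh (ρ / 2) := Real.sinh_pos_iff.2 (by linarith)
  have hc : 0 < Real.cosh (ρ / 2) := Real.cosh_pos _
  rw [sinh_eq_double, Real.log_mul (by positivity) hc.ne',
    Real.log_mul (by norm_num) hs.ne']

lemma cothAux_hasDerivAt {ρ : ℝ} (hρ : 0 < ρ) :
    HasDerivAt cothAux (Real.log (Real.coth ρ) * Real.sinh ρ) ρ := by
  have hs : 0 < Real.sinh (ρ / 2) := Real.sinh_pos_iff.2 (by linarith)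
  have hc : 0 < Real.cosh (ρ / 2) := Real.cosh_pos _
  have hS : 0 < Real.sinh ρ := Real.sinh_pos_iff.2 hρ
  have hC : 0 < Real.cosh ρ := Real.cosh_pos ρ
  have hhalf : HasDerivAt (fun x : ℝ => x / 2) (1 / 2) ρ := (hasDerivAt_id ρ).div_const 2
  have hsh : HasDerivAt (fun x : ℝ => Real.sinh (x / 2)) (Real.cosh (ρ / 2) * (1 / 2)) ρ :=
    by have := HasDerivAt.comp ρ (Real.hasDerivAt_sinh (ρ / 2)) hhalf; exact this
  have hch : HasDerivAt (fun x : ℝ => Real.cosh (x / 2)) (Real.sinh (ρ / 2) * (1 / 2)) ρ :=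
    by have := HasDerivAt.comp ρ (Real.hasDerivAt_cosh (ρ / 2)) hhalf; exact this
  have hs2 : HasDerivAt (fun x : ℝ => Real.sinh (x / 2) ^ 2)
      (2 * Real.sinh (ρ / 2) ^ 1 * (Real.cosh (ρ / 2) * (1 / 2))) ρ := by
    exact (hsh.pow 2).congr_deriv (by simp)
  have hc2 : HasDerivAt (fun x : ℝ => Real.cosh (x / 2) ^ 2)
      (2 * Real.cosh (ρ / 2) ^ 1 * (Real.sinh (ρ / 2) * (1 / 2))) ρ := by
    exact (hch.pow 2).congr_deriv (by simp)
  have h1 : HasDerivAt (fun x : ℝ => Real.cosh x * Real.log (Real.cosh x))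
      (Real.sinh ρ * Real.log (Real.cosh ρ) + Real.cosh ρ * (Real.sinh ρ / Real.cosh ρ)) ρ :=
    (Real.hasDerivAt_cosh ρ).mul ((Real.hasDerivAt_cosh ρ).log hC.ne')
  have h2 : HasDerivAt (fun x : ℝ => Real.log 2 * Real.cosh x) (Real.log 2 * Real.sinh ρ) ρ :=
    (Real.hasDerivAt_cosh ρ).const_mul _
  have h3 : HasDerivAt (fun x : ℝ => Real.sinh (x / 2) ^ 2 * Real.log (Real.sinh (x / 2) ^ 2))
      (2 * Real.sinh (ρ / 2) ^ 1 * (Real.cosh (ρ / 2) * (1 / 2)) *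
          Real.log (Real.sinh (ρ / 2) ^ 2) +
        Real.sinh (ρ / 2) ^ 2 *
          (2 * Real.sinh (ρ / 2) ^ 1 * (Real.cosh (ρ / 2) * (1 / 2)) /
            Real.sinh (ρ / 2) ^ 2)) ρ :=
    hs2.mul (hs2.log (by positivity))
  have h4 : HasDerivAt (fun x : ℝ => Real.cosh (x / 2) ^ 2 * Real.log (Real.cosh (x / 2) ^ 2))
      (2 * Real.cosh (ρ / 2) ^ 1 * (Real.sinh (ρ / 2) * (1 / 2)) *
          Real.log (Real.cosh (ρ / 2) ^ 2) +
        Real.cosh (ρ / 2) ^ 2 *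
          (2 * Real.cosh (ρ / 2) ^ 1 * (Real.sinh (ρ / 2) * (1 / 2)) /
            Real.cosh (ρ / 2) ^ 2)) ρ :=
    hc2.mul (hc2.log (by positivity))
  have hG := ((h1.sub h2).sub h3).sub h4
  refine hG.congr_deriv (Eq.symm ?_)
  rw [show Real.coth ρ = Real.cosh ρ / Real.sinh ρ from rfl, Real.log_div hC.ne' hS.ne', log_sinh_eq hρ, Real.log_pow, Real.log_pow]
  rw [sinh_eq_double ρ]
  push_cast
  field_simp
  ring

lemma cothAux_eq {ρ : ℝ} (hρ : 0 < ρ) :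
    cothAux ρ = Real.cosh ρ * Real.log (Real.cosh ρ / Real.sinh ρ) +
      (Real.log (Real.sinh (ρ / 2)) - Real.log (Real.cosh (ρ / 2))) := by
  have hS : 0 < Real.sinh ρ := Real.sinh_pos_iff.2 hρ
  have hC : 0 < Real.cosh ρ := Real.cosh_pos ρ
  rw [cothAux, Real.log_div hC.ne' hS.ne', log_sinh_eq hρ, Real.log_pow, Real.log_pow,
    cosh_eq_double ρ, Real.cosh_sq (ρ / 2)]
  push_cast
  ring

lemma cothAux_tendsto : Filter.Tendsto cothAux Filter.atTop (nhds 0) := by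
  have hlow : Filter.Tendsto (fun ρ : ℝ => -(2 * Real.exp (-(ρ / 2)))) Filter.atTop (nhds 0) := by
    have h : Filter.Tendsto (fun ρ : ℝ => -(ρ / 2)) Filter.atTop Filter.atBot :=
      Filter.tendsto_neg_atTop_atBot.comp (Filter.tendsto_id.atTop_div_const two_pos)
    have := (Real.tendsto_exp_atBot.comp h).const_mul 2
    simpa using this.neg
  have hhigh : Filter.Tendsto (fun ρ : ℝ => 2 * Real.exp (-ρ)) Filter.atTop (nhds 0) := by
    have := (Real.tendsto_exp_atBot.comp Filter.tendsto_neg_atTop_atBot).const_mul 2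
    simpa using this
  apply tendsto_of_tendsto_of_tendsto_of_le_of_le' hlow hhigh
  · filter_upwards [Filter.eventually_ge_atTop (1 : ℝ)] with ρ hρ
    have hρ0 : (0 : ℝ) < ρ := by linarith
    have hs : 0 < Real.sinh (ρ / 2) := Real.sinh_pos_iff.2 (by linarith)
    have hc : 0 < Real.cosh (ρ / 2) := Real.cosh_pos _
    have hS : 0 < Real.sinh ρ := Real.sinh_pos_iff.2 hρ0
    have hC : 0 < Real.cosh ρ := Real.cosh_pos ρ
    have hsc : Real.cosh (ρ / 2) - Real.sinh (ρ / 2) = Real.exp (-(ρ / 2)) :=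
      Real.cosh_sub_sinh _
    have hshalf : 1 / 2 ≤ Real.sinh (ρ / 2) := by
      have := Real.self_lt_sinh_iff.2 (show (0:ℝ) < ρ / 2 by linarith)
      linarith
    have hL : 0 ≤ Real.log (Real.cosh ρ / Real.sinh ρ) := by
      apply Real.log_nonneg
      rw [le_div_iff₀ hS]
      nlinarith [Real.cosh_sub_sinh ρ, Real.exp_pos (-ρ)]
    have hB : Real.log (Real.cosh (ρ / 2)) - Real.log (Real.sinh (ρ / 2)) ≤
        2 * Real.exp (-(ρ / 2)) := by
      have h1 : Real.log (Real.cosh (ρ / 2) / Real.sinh (ρ / 2)) ≤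
          Real.cosh (ρ / 2) / Real.sinh (ρ / 2) - 1 :=
        Real.log_le_sub_one_of_pos (by positivity)
      rw [Real.log_div hc.ne' hs.ne'] at h1
      have h2 : Real.cosh (ρ / 2) / Real.sinh (ρ / 2) - 1 =
          Real.exp (-(ρ / 2)) / Real.sinh (ρ / 2) := by
        rw [div_sub_one hs.ne', hsc]
      rw [h2] at h1
      have h3 : Real.exp (-(ρ / 2)) / Real.sinh (ρ / 2) ≤ 2 * Real.exp (-(ρ / 2)) := by
        rw [div_le_iff₀ hs]
        nlinarith [Real.exp_pos (-(ρ / 2))]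
      linarith
    rw [cothAux_eq hρ0]
    nlinarith [mul_nonneg hC.le hL]
  · filter_upwards [Filter.eventually_ge_atTop (1 : ℝ)] with ρ hρ
    have hρ0 : (0 : ℝ) < ρ := by linarith
    have hs : 0 < Real.sinh (ρ / 2) := Real.sinh_pos_iff.2 (by linarith)
    have hc : 0 < Real.cosh (ρ / 2) := Real.cosh_pos _
    have hS : 0 < Real.sinh ρ := Real.sinh_pos_iff.2 hρ0
    have hC : 0 < Real.cosh ρ := Real.cosh_pos ρ
    have hCS : Real.cosh ρ - Real.sinh ρ = Real.exp (-ρ) := Real.cosh_sub_sinh ρ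
    have hS1 : 1 ≤ Real.sinh ρ := le_trans hρ (Real.self_lt_sinh_iff.2 hρ0).le
    have hE1 : Real.exp (-ρ) ≤ 1 := Real.exp_le_one_iff.2 (by linarith)
    have hC2S : Real.cosh ρ ≤ 2 * Real.sinh ρ := by linarith
    have hL : Real.log (Real.cosh ρ / Real.sinh ρ) ≤ Real.exp (-ρ) / Real.sinh ρ := by
      have h1 : Real.log (Real.cosh ρ / Real.sinh ρ) ≤ Real.cosh ρ / Real.sinh ρ - 1 :=
        Real.log_le_sub_one_of_pos (by positivity)
      have h2 : Real.cosh ρ / Real.sinh ρ - 1 = Real.exp (-ρ) / Real.sinh ρ := by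
        rw [div_sub_one hS.ne', hCS]
      linarith [h2 ▸ h1]
    have hL0 : 0 ≤ Real.log (Real.cosh ρ / Real.sinh ρ) := by
      apply Real.log_nonneg
      rw [le_div_iff₀ hS]
      nlinarith [Real.exp_pos (-ρ)]
    have hBnn : Real.log (Real.sinh (ρ / 2)) ≤ Real.log (Real.cosh (ρ / 2)) := by
      apply Real.log_le_log hs
      nlinarith [Real.cosh_sub_sinh (ρ / 2), Real.exp_pos (-(ρ / 2))]
    have hA : Real.cosh ρ * Real.log (Real.cosh ρ / Real.sinh ρ) ≤ 2 * Real.exp (-ρ) := by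
      calc Real.cosh ρ * Real.log (Real.cosh ρ / Real.sinh ρ)
          ≤ (2 * Real.sinh ρ) * (Real.exp (-ρ) / Real.sinh ρ) :=
            mul_le_mul hC2S hL hL0 (by positivity)
        _ = 2 * Real.exp (-ρ) := by field_simp
    rw [cothAux_eq hρ0]
    linarith

/-- The improper integral `∫₀^∞ log(coth ρ) sinh ρ dρ` converges and
equals `log 2`; equivalently `∫₀^∞ log(coth² ρ) sinh ρ dρ = 2 log 2`. -/
theorem integral_log_coth_sinh :
    IntegrableOn (fun ρ : ℝ => Real.log (Real.coth ρ) * Real.sinh ρ) (Set.Ioi 0) ∧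
    (∫ ρ in Set.Ioi (0 : ℝ), Real.log (Real.coth ρ) * Real.sinh ρ) = Real.log 2 ∧
    (∫ ρ in Set.Ioi (0 : ℝ), Real.log ((Real.coth ρ) ^ 2) * Real.sinh ρ) = 2 * Real.log 2 := by
  have hnn : ∀ x ∈ Set.Ioi (0 : ℝ), 0 ≤ Real.log (Real.coth x) * Real.sinh x := by
    intro x hx
    have hS : 0 < Real.sinh x := Real.sinh_pos_iff.2 hx
    refine mul_nonneg (Real.log_nonneg ?_) hS.le
    rw [Real.coth, le_div_iff₀ hS]
    nlinarith [Real.cosh_sub_sinh x, Real.exp_pos (-x)]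
  have hcont : ContinuousWithinAt cothAux (Set.Ici 0) 0 :=
    cothAux_continuous.continuousWithinAt
  have hderiv : ∀ x ∈ Set.Ioi (0 : ℝ),
      HasDerivAt cothAux (Real.log (Real.coth x) * Real.sinh x) x :=
    fun x hx => cothAux_hasDerivAt hx
  have hint := integrableOn_Ioi_deriv_of_nonneg hcont hderiv hnn cothAux_tendsto
  have hval := integral_Ioi_of_hasDerivAt_of_nonneg hcont hderiv hnn cothAux_tendsto
  rw [cothAux_zero] at hval
  have hval' : (∫ ρ in Set.Ioi (0 : ℝ), Real.log (Real.coth ρ) * Real.sinh ρ) = Real.log 2 := by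
    rw [hval]; ring
  refine ⟨hint, hval', ?_⟩
  have hsq : ∀ ρ : ℝ, Real.log ((Real.coth ρ) ^ 2) * Real.sinh ρ =
      2 * (Real.log (Real.coth ρ) * Real.sinh ρ) := by
    intro ρ; rw [Real.log_pow]; push_cast; ring
  simp_rw [hsq]
  rw [integral_const_mul, hval']
end
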